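/- arXiv:math/0602468 — 4 statements merged into one kernel-verified Lean document; each statement's English description precedes it below -/
import Mathlib

section
/- Let A, B : [0,1] → ℝ be continuous. Suppose there exist real numbers a and b such that the function t ↦ a·A(t) + b·B(t) is not identically zero on [0,1] and does not change sign on [0,1]. Then the Abel equation x' = A(t)x³ + B(t)x² has at most one periodic orbit with nonzero initial condition; that is, if γ₁ and γ₂ are periodic orbits with γ₁(0) ≠ 0 and γ₂(0) ≠ 0, then γ₁ = γ₂. -/
open Set

/-- `γ : ℝ → ℝ` is a solution of the Abel equation `x' = A(t)x³ + B(t)x²` on `[0,1]`. -/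
def IsAbelSolution (A B : ℝ → ℝ) (γ : ℝ → ℝ) : Prop :=
  ∀ t ∈ Set.Icc (0:ℝ) 1,
    HasDerivWithinAt γ (A t * γ t ^ 3 + B t * γ t ^ 2) (Set.Icc (0:ℝ) 1) t

/-- A periodic orbit of the Abel equation: a solution on `[0,1]` with `γ 0 = γ 1`. -/
def IsPeriodicOrbit (A B : ℝ → ℝ) (γ : ℝ → ℝ) : Prop :=
  IsAbelSolution A B γ ∧ γ 0 = γ 1


/-- Continuous nonvanishing function on `[0,1]` has constant sign. -/
lemma abel_sign_dichotomy {ρ : ℝ → ℝ} (hc : ContinuousOn ρ (Set.Icc 0 1))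
    (hne : ∀ t ∈ Set.Icc (0:ℝ) 1, ρ t ≠ 0) :
    (∀ t ∈ Set.Icc (0:ℝ) 1, 0 < ρ t) ∨ (∀ t ∈ Set.Icc (0:ℝ) 1, ρ t < 0) := by
  by_contra h
  push_neg at h
  obtain ⟨⟨u, hu, hu'⟩, ⟨v, hv, hv'⟩⟩ := h
  have h1 : ρ u < 0 := lt_of_le_of_ne hu' (hne u hu)
  have h2 : 0 < ρ v := hv'.lt_of_ne (Ne.symm (hne v hv))
  have hsub : Set.uIcc u v ⊆ Set.Icc (0:ℝ) 1 := Set.uIcc_subset_Icc hu hv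
  have := intermediate_value_uIcc (hc.mono hsub)
  have h0 : (0:ℝ) ∈ Set.uIcc (ρ u) (ρ v) := by
    rw [Set.mem_uIcc]; left; exact ⟨h1.le, h2.le⟩
  obtain ⟨t, ht, ht0⟩ := this h0
  exact hne t (hsub ht) ht0

lemma abel_monoOn {K w : ℝ → ℝ}
    (hK : ∀ t ∈ Set.Icc (0:ℝ) 1, HasDerivWithinAt K (w t) (Set.Icc (0:ℝ) 1) t)
    (hw : ∀ t ∈ Set.Icc (0:ℝ) 1, 0 ≤ w t) : MonotoneOn K (Set.Icc (0:ℝ) 1) := by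
  apply monotoneOn_of_deriv_nonneg (convex_Icc (0:ℝ) 1)
    (fun t ht => (hK t ht).continuousWithinAt)
  · intro t ht
    rw [interior_Icc] at ht
    exact ((hK t (Ioo_subset_Icc_self ht)).hasDerivAt
      (Icc_mem_nhds ht.1 ht.2)).differentiableAt.differentiableWithinAt
  · intro t ht
    rw [interior_Icc] at ht
    rw [((hK t (Ioo_subset_Icc_self ht)).hasDerivAt (Icc_mem_nhds ht.1 ht.2)).deriv]
    exact hw t (Ioo_subset_Icc_self ht)

lemma abel_constOn {K : ℝ → ℝ}
    (hK : ∀ t ∈ Set.Icc (0:ℝ) 1, HasDerivWithinAt K 0 (Set.Icc (0:ℝ) 1) t) :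
    ∀ t ∈ Set.Icc (0:ℝ) 1, K t = K 0 := by
  have h0 : (0:ℝ) ∈ Set.Icc (0:ℝ) 1 := by norm_num
  have h1 := abel_monoOn (w := fun _ => 0) hK (fun t _ => le_rfl)
  have h2 := abel_monoOn (K := fun t => -K t) (w := fun _ => 0)
    (fun t ht => (hK t ht).neg.congr_deriv (by simp)) (fun t _ => le_rfl)
  intro t ht
  refine le_antisymm ?_ (h1 h0 ht ht.1)
  have := h2 h0 ht ht.1
  simpa using this

lemma abel_core {K ρ D : ℝ → ℝ}
    (hK : ∀ t ∈ Set.Icc (0:ℝ) 1, HasDerivWithinAt K (ρ t * D t) (Set.Icc (0:ℝ) 1) t)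
    (hρ : ∀ t ∈ Set.Icc (0:ℝ) 1, 0 < ρ t)
    (hD0 : ∀ t ∈ Set.Icc (0:ℝ) 1, 0 ≤ D t)
    (hper : K 1 = K 0) :
    ∀ t ∈ Set.Icc (0:ℝ) 1, D t = 0 := by
  have h0 : (0:ℝ) ∈ Set.Icc (0:ℝ) 1 := by norm_num
  have h1m : (1:ℝ) ∈ Set.Icc (0:ℝ) 1 := by norm_num
  have hmono := abel_monoOn hK (fun t ht => mul_nonneg (hρ t ht).le (hD0 t ht))
  have hconst : ∀ t ∈ Set.Icc (0:ℝ) 1, K t = K 0 := by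
    intro t ht
    exact le_antisymm (hper ▸ hmono ht h1m ht.2) (hmono h0 ht ht.1)
  intro t ht
  have hz : HasDerivWithinAt K 0 (Set.Icc (0:ℝ) 1) t :=
    (hasDerivWithinAt_const t (Set.Icc (0:ℝ) 1) (K 0)).congr
      (fun y hy => hconst y hy) (hconst t ht)
  have hu : UniqueDiffWithinAt ℝ (Set.Icc (0:ℝ) 1) t := (uniqueDiffOn_Icc one_pos) t ht
  have e1 := (hK t ht).derivWithin hu
  have e2 := hz.derivWithin hu
  have : ρ t * D t = 0 := by rw [← e1, e2]
  rcases mul_eq_zero.1 this with h | h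
  · exact absurd h (ne_of_gt (hρ t ht))
  · exact h

lemma abel_core' {K ρ D : ℝ → ℝ}
    (hK : ∀ t ∈ Set.Icc (0:ℝ) 1, HasDerivWithinAt K (ρ t * D t) (Set.Icc (0:ℝ) 1) t)
    (hρc : ContinuousOn ρ (Set.Icc 0 1)) (hρne : ∀ t ∈ Set.Icc (0:ℝ) 1, ρ t ≠ 0)
    (hD0 : ∀ t ∈ Set.Icc (0:ℝ) 1, 0 ≤ D t) (hper : K 1 = K 0) :
    ∀ t ∈ Set.Icc (0:ℝ) 1, D t = 0 := by
  rcases abel_sign_dichotomy hρc hρne with h | h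
  · exact abel_core hK h hD0 hper
  · refine abel_core (K := fun t => -K t) (ρ := fun t => -ρ t) (D := D)
      (fun t ht => (hK t ht).neg.congr_deriv (by simp [neg_mul])) (fun t ht => by simpa using h t ht)
      hD0 (by simp [hper])

lemma abel_ftc {f : ℝ → ℝ} (hf : ContinuousOn f (Set.Icc 0 1)) :
    ∀ t ∈ Set.Icc (0:ℝ) 1,
      HasDerivWithinAt (fun u => ∫ s in (0:ℝ)..u, f s) (f t) (Set.Icc (0:ℝ) 1) t := by
  intro t ht
  haveI : Fact (t ∈ Set.Icc (0:ℝ) 1) := ⟨ht⟩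
  apply intervalIntegral.integral_hasDerivWithinAt_right (t := Set.Icc (0:ℝ) 1)
  · apply ContinuousOn.intervalIntegrable
    apply hf.mono
    rw [Set.uIcc_of_le ht.1]
    exact Set.Icc_subset_Icc le_rfl ht.2
  · exact hf.stronglyMeasurableAtFilter_nhdsWithin measurableSet_Icc t
  · exact hf t ht

lemma abel_linODE {f g : ℝ → ℝ} (hg : ContinuousOn g (Set.Icc 0 1))
    (hf : ∀ t ∈ Set.Icc (0:ℝ) 1, HasDerivWithinAt f (g t * f t) (Set.Icc (0:ℝ) 1) t) :
    ∀ t ∈ Set.Icc (0:ℝ) 1, f t = f 0 * Real.exp (∫ s in (0:ℝ)..t, g s) := by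
  have hGd := abel_ftc hg
  have key : ∀ t ∈ Set.Icc (0:ℝ) 1,
      Real.exp (-(∫ s in (0:ℝ)..t, g s)) * f t
        = Real.exp (-(∫ s in (0:ℝ)..(0:ℝ), g s)) * f 0 := by
    apply abel_constOn
    intro t ht
    have h1 : HasDerivWithinAt (fun u => Real.exp (-(∫ s in (0:ℝ)..u, g s)))
        (Real.exp (-(∫ s in (0:ℝ)..t, g s)) * (-(g t))) (Set.Icc (0:ℝ) 1) t :=
      ((hGd t ht).neg).exp
    have h2 := h1.mul (hf t ht)
    exact h2.congr_deriv (by ring)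
  intro t ht
  have h := key t ht
  rw [intervalIntegral.integral_same] at h
  simp only [neg_zero, Real.exp_zero, one_mul] at h
  rw [← h, Real.exp_neg]
  field_simp

section part2

variable {A B γ : ℝ → ℝ}

lemma abel_cont (h : IsAbelSolution A B γ) : ContinuousOn γ (Set.Icc 0 1) :=
  fun t ht => (h t ht).continuousWithinAt

lemma abel_nonvanish (hA : ContinuousOn A (Set.Icc 0 1)) (hB : ContinuousOn B (Set.Icc 0 1))
    (h : IsAbelSolution A B γ) (h0 : γ 0 ≠ 0) :
    ∀ t ∈ Set.Icc (0:ℝ) 1, γ t ≠ 0 := by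
  have hc := abel_cont h
  have hg : ContinuousOn (fun s => A s * γ s ^ 2 + B s * γ s) (Set.Icc 0 1) :=
    (hA.mul (hc.pow 2)).add (hB.mul hc)
  have := abel_linODE hg (f := γ) (fun t ht => by
    have := h t ht
    convert this using 1
    ring)
  intro t ht
  rw [this t ht]
  exact mul_ne_zero h0 (Real.exp_ne_zero _)

lemma abel_diff_rep (hA : ContinuousOn A (Set.Icc 0 1)) (hB : ContinuousOn B (Set.Icc 0 1))
    {γ₁ γ₂ : ℝ → ℝ} (h1 : IsAbelSolution A B γ₁) (h2 : IsAbelSolution A B γ₂) :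
    ∀ t ∈ Set.Icc (0:ℝ) 1, γ₁ t - γ₂ t = (γ₁ 0 - γ₂ 0) *
      Real.exp (∫ s in (0:ℝ)..t,
        (A s * (γ₁ s ^ 2 + γ₁ s * γ₂ s + γ₂ s ^ 2) + B s * (γ₁ s + γ₂ s))) := by
  have hc1 := abel_cont h1
  have hc2 := abel_cont h2
  have hg : ContinuousOn
      (fun s => A s * (γ₁ s ^ 2 + γ₁ s * γ₂ s + γ₂ s ^ 2) + B s * (γ₁ s + γ₂ s))
      (Set.Icc 0 1) :=
    (hA.mul (((hc1.pow 2).add (hc1.mul hc2)).add (hc2.pow 2))).add (hB.mul (hc1.add hc2))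
  exact abel_linODE hg (f := fun t => γ₁ t - γ₂ t) (fun t ht => by
    have := (h1 t ht).sub (h2 t ht)
    exact this.congr_deriv (by ring))



/-- A nonvanishing periodic orbit cannot meet the line `b*x = a`. -/
lemma abel_line_avoid {A B γ : ℝ → ℝ} {a b : ℝ}
    (hA : ContinuousOn A (Set.Icc 0 1))
    (hsol : IsAbelSolution A B γ) (hper : γ 0 = γ 1)
    (hγ : ∀ t ∈ Set.Icc (0:ℝ) 1, γ t ≠ 0)
    (hD0 : ∀ t ∈ Set.Icc (0:ℝ) 1, 0 ≤ a * A t + b * B t)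
    (hDne : ¬ ∀ t ∈ Set.Icc (0:ℝ) 1, a * A t + b * B t = 0) :
    ∀ t ∈ Set.Icc (0:ℝ) 1, b * γ t - a ≠ 0 := by
  have hc := abel_cont hsol
  have hRcont : ContinuousOn (fun s => A s * γ s ^ 2) (Set.Icc 0 1) := hA.mul (hc.pow 2)
  have hRd := abel_ftc hRcont
  set R := fun u : ℝ => ∫ s in (0:ℝ)..u, A s * γ s ^ 2 with hRdef
  set m := fun u : ℝ => Real.exp (-(R u)) * (b * γ u - a) with hmdef
  have hρpos : ∀ t ∈ Set.Icc (0:ℝ) 1, 0 < Real.exp (-(R t)) * γ t ^ 2 := by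
    intro t ht
    exact mul_pos (Real.exp_pos _)
      (lt_of_le_of_ne (sq_nonneg _) (Ne.symm (pow_ne_zero 2 (hγ t ht))))
  have hm : ∀ t ∈ Set.Icc (0:ℝ) 1, HasDerivWithinAt m
      ((Real.exp (-(R t)) * γ t ^ 2) * (a * A t + b * B t)) (Set.Icc (0:ℝ) 1) t := by
    intro t ht
    have h1 : HasDerivWithinAt (fun u => Real.exp (-(R u)))
        (Real.exp (-(R t)) * (-(A t * γ t ^ 2))) (Set.Icc (0:ℝ) 1) t := ((hRd t ht).neg).exp
    have h2 : HasDerivWithinAt (fun u => b * γ u - a)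
        (b * (A t * γ t ^ 3 + B t * γ t ^ 2)) (Set.Icc (0:ℝ) 1) t :=
      ((hsol t ht).const_mul b).sub_const a
    have h3 := h1.mul h2
    exact h3.congr_deriv (by ring)
  have hmono := abel_monoOn hm
    (fun t ht => mul_nonneg (hρpos t ht).le (hD0 t ht))
  intro t₁ ht₁ hzero
  have h0 : (0:ℝ) ∈ Set.Icc (0:ℝ) 1 := by norm_num
  have h1m : (1:ℝ) ∈ Set.Icc (0:ℝ) 1 := by norm_num
  have hmt₁ : m t₁ = 0 := by simp [hmdef, hzero]
  have e1 : m 0 ≤ 0 := hmt₁ ▸ hmono h0 ht₁ ht₁.1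
  have e2 : 0 ≤ m 1 := hmt₁ ▸ hmono ht₁ h1m ht₁.2
  have hR0 : R 0 = 0 := intervalIntegral.integral_same
  have hm0 : m 0 = b * γ 0 - a := by simp [hmdef, hR0]
  have hm1 : m 1 = Real.exp (-(R 1)) * (b * γ 0 - a) := by rw [hmdef]; simp [← hper]
  have hE1 : 0 < Real.exp (-(R 1)) := Real.exp_pos _
  have hh0 : b * γ 0 - a = 0 := by
    rw [hm0] at e1
    rw [hm1] at e2
    nlinarith
  have hDz := abel_core hm hρpos hD0 (by rw [hm1, hm0, hh0, mul_zero])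
  exact hDne hDz


lemma abel_key {A B γ₁ γ₂ : ℝ → ℝ} {a b : ℝ}
    (hA : ContinuousOn A (Set.Icc 0 1)) (hB : ContinuousOn B (Set.Icc 0 1))
    (hDne : ¬ ∀ t ∈ Set.Icc (0:ℝ) 1, a * A t + b * B t = 0)
    (hD0 : ∀ t ∈ Set.Icc (0:ℝ) 1, 0 ≤ a * A t + b * B t)
    (h₁ : IsPeriodicOrbit A B γ₁) (h₂ : IsPeriodicOrbit A B γ₂)
    (n₁ : γ₁ 0 ≠ 0) (n₂ : γ₂ 0 ≠ 0) (hne : γ₁ 0 ≠ γ₂ 0) : False := by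
  have hc1 := abel_cont h₁.1
  have hc2 := abel_cont h₂.1
  have hx := abel_nonvanish hA hB h₁.1 n₁
  have hy := abel_nonvanish hA hB h₂.1 n₂
  have hδ : ∀ t ∈ Set.Icc (0:ℝ) 1, γ₁ t - γ₂ t ≠ 0 := by
    intro t ht
    rw [abel_diff_rep hA hB h₁.1 h₂.1 t ht]
    exact mul_ne_zero (sub_ne_zero.2 hne) (Real.exp_ne_zero _)
  have hp1 : γ₁ 1 = γ₁ 0 := h₁.2.symm
  have hp2 : γ₂ 1 = γ₂ 0 := h₂.2.symm
  rcases eq_or_ne b 0 with rfl | hb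
  · -- case b = 0
    have ha : a ≠ 0 := by
      rintro rfl
      exact hDne (fun t _ => by ring)
    refine hDne (abel_core' (K := fun u => (γ₂ u)⁻¹ - (γ₁ u)⁻¹)
      (ρ := fun t => (γ₁ t - γ₂ t) / a) ?_ ?_ ?_ hD0 ?_)
    · intro t ht
      have hIy := (h₂.1 t ht).inv (hy t ht)
      have hIx := (h₁.1 t ht).inv (hx t ht)
      have h := hIy.sub hIx
      have e1 := hx t ht
      have e2 := hy t ht
      exact h.congr_deriv (by field_simp; ring)
    · exact (hc1.sub hc2).div_const a
    · intro t ht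
      exact div_ne_zero (hδ t ht) ha
    · simp only [hp1, hp2]
  rcases eq_or_ne a 0 with rfl | ha
  · -- case a = 0
    refine hDne (abel_core' (K := fun u => (γ₂ u ^ 2)⁻¹ - (γ₁ u ^ 2)⁻¹)
      (ρ := fun t => 2 * (γ₂ t - γ₁ t) / (b * (γ₁ t * γ₂ t))) ?_ ?_ ?_ hD0 ?_)
    · intro t ht
      have e1 := hx t ht
      have e2 := hy t ht
      have hIy := ((h₂.1 t ht).pow 2).inv (pow_ne_zero 2 e2)
      have hIx := ((h₁.1 t ht).pow 2).inv (pow_ne_zero 2 e1)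
      have h := hIy.sub hIx
      exact h.congr_deriv (by simp only [Pi.pow_apply, Pi.mul_apply]; field_simp; ring)
    · exact (continuousOn_const.mul (hc2.sub hc1)).div
        (continuousOn_const.mul (hc1.mul hc2))
        (fun t ht => mul_ne_zero hb (mul_ne_zero (hx t ht) (hy t ht)))
    · intro t ht
      refine div_ne_zero (mul_ne_zero two_ne_zero ?_)
        (mul_ne_zero hb (mul_ne_zero (hx t ht) (hy t ht)))
      have := hδ t ht
      intro e
      apply this
      linarith [sub_eq_zero.1 e]
    · simp only [hp1, hp2]
  · -- main case : a ≠ 0, b ≠ 0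
    have hline := abel_line_avoid hA h₁.1 h₁.2 hx hD0 hDne
    refine hDne (abel_core'
      (K := fun u => Real.exp ((a/b) * ((γ₂ u)⁻¹ - (γ₁ u)⁻¹)) *
        (γ₁ u * (b * γ₂ u - a)) / (γ₂ u * (b * γ₁ u - a)))
      (ρ := fun t => a^2 / b * Real.exp ((a/b) * ((γ₂ t)⁻¹ - (γ₁ t)⁻¹)) *
        (γ₁ t * (γ₁ t - γ₂ t)) / (γ₂ t * (b * γ₁ t - a)^2)) ?_ ?_ ?_ hD0 ?_)
    · intro t ht
      have e1 := hx t ht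
      have e2 := hy t ht
      have e3 := hline t ht
      have hIy := (h₂.1 t ht).inv e2
      have hIx := (h₁.1 t ht).inv e1
      have hW : HasDerivWithinAt (fun u => (a/b) * ((γ₂ u)⁻¹ - (γ₁ u)⁻¹))
          ((a/b) * ((-(A t * γ₂ t ^ 3 + B t * γ₂ t ^ 2) / γ₂ t ^ 2) -
            (-(A t * γ₁ t ^ 3 + B t * γ₁ t ^ 2) / γ₁ t ^ 2))) (Set.Icc (0:ℝ) 1) t :=
        (hIy.sub hIx).const_mul (a/b)
      have hE := hW.exp
      have hNum : HasDerivWithinAt (fun u => γ₁ u * (b * γ₂ u - a))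
          ((A t * γ₁ t ^ 3 + B t * γ₁ t ^ 2) * (b * γ₂ t - a) +
            γ₁ t * (b * (A t * γ₂ t ^ 3 + B t * γ₂ t ^ 2))) (Set.Icc (0:ℝ) 1) t :=
        (h₁.1 t ht).mul (((h₂.1 t ht).const_mul b).sub_const a)
      have hDen : HasDerivWithinAt (fun u => γ₂ u * (b * γ₁ u - a))
          ((A t * γ₂ t ^ 3 + B t * γ₂ t ^ 2) * (b * γ₁ t - a) +
            γ₂ t * (b * (A t * γ₁ t ^ 3 + B t * γ₁ t ^ 2))) (Set.Icc (0:ℝ) 1) t :=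
        (h₂.1 t ht).mul (((h₁.1 t ht).const_mul b).sub_const a)
      have h := (hE.mul hNum).div hDen (mul_ne_zero e2 e3)
      exact h.congr_deriv (by simp only [Pi.pow_apply, Pi.mul_apply]; field_simp; ring)
    · refine ContinuousOn.div ?_ ?_
        (fun t ht => mul_ne_zero (hy t ht) (pow_ne_zero 2 (hline t ht)))
      · exact (continuousOn_const.mul (Real.continuous_exp.comp_continuousOn
          (continuousOn_const.mul ((hc2.inv₀ hy).sub (hc1.inv₀ hx))))).mul
          (hc1.mul (hc1.sub hc2))
      · exact hc2.mul (((continuousOn_const.mul hc1).sub continuousOn_const).pow 2)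
    · intro t ht
      exact div_ne_zero (mul_ne_zero (mul_ne_zero (div_ne_zero (pow_ne_zero 2 ha) hb)
        (Real.exp_ne_zero _)) (mul_ne_zero (hx t ht) (hδ t ht)))
        (mul_ne_zero (hy t ht) (pow_ne_zero 2 (hline t ht)))
    · simp only [hp1, hp2]


theorem abel_at_most_one_nonzero_periodic_orbit
    (A B : ℝ → ℝ)
    (hA : ContinuousOn A (Set.Icc 0 1)) (hB : ContinuousOn B (Set.Icc 0 1))
    (a b : ℝ)
    (h_not_ident_zero : ¬ ∀ t ∈ Set.Icc (0:ℝ) 1, a * A t + b * B t = 0)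
    (h_sign : (∀ t ∈ Set.Icc (0:ℝ) 1, 0 ≤ a * A t + b * B t) ∨
              (∀ t ∈ Set.Icc (0:ℝ) 1, a * A t + b * B t ≤ 0))
    (γ₁ γ₂ : ℝ → ℝ)
    (h₁ : IsPeriodicOrbit A B γ₁) (h₂ : IsPeriodicOrbit A B γ₂)
    (n₁ : γ₁ 0 ≠ 0) (n₂ : γ₂ 0 ≠ 0) :
    Set.EqOn γ₁ γ₂ (Set.Icc 0 1) := by
  by_cases h0 : γ₁ 0 = γ₂ 0
  · intro t ht
    have := abel_diff_rep hA hB h₁.1 h₂.1 t ht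
    rw [h0, sub_self, zero_mul] at this
    exact sub_eq_zero.1 this
  · exfalso
    rcases h_sign with hs | hs
    · exact abel_key hA hB h_not_ident_zero hs h₁ h₂ n₁ n₂ h0
    · refine abel_key (a := -a) (b := -b) hA hB ?_ ?_ h₁ h₂ n₁ n₂ h0
      · intro hall
        apply h_not_ident_zero
        intro t ht
        have := hall t ht
        linarith
      · intro t ht
        have := hs t ht
        linarith
end part2
end

section
/- Let A, B : [0,1] → ℝ be continuous. Suppose there exist real numbers a and b such that the function t ↦ a·A(t) + b·B(t) is not identically zero on [0,1] and does not change sign on [0,1]. Then every periodic orbit γ of the Abel equation x' = A(t)x³ + B(t)x² with γ(0) ≠ 0 is hyperbolic, i.e. ∫₀¹ (3A(t)γ(t)² + 2B(t)γ(t)) dt ≠ 0. -/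
/-- A periodic orbit is hyperbolic iff `∫₀¹ (3A(t)γ(t)² + 2B(t)γ(t)) dt ≠ 0`. -/
def IsHyperbolic (A B : ℝ → ℝ) (γ : ℝ → ℝ) : Prop :=
  (∫ t in (0:ℝ)..1, (3 * A t * γ t ^ 2 + 2 * B t * γ t)) ≠ 0

open Set MeasureTheory

namespace AbelHypAux

/-- FTC-1 for a globally continuous integrand. -/
lemma ftc1 {g : ℝ → ℝ} (hg : Continuous g) (t : ℝ) :
    HasDerivAt (fun u => ∫ s in (0:ℝ)..u, g s) (g t) t :=
  intervalIntegral.integral_hasDerivAt_right (hg.intervalIntegrable _ _)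
    (hg.stronglyMeasurableAtFilter _ _) hg.continuousAt

/-- FTC-2 for a derivative within `Icc`. -/
lemma ftc2 {F g : ℝ → ℝ} {α β : ℝ} (hab : α ≤ β)
    (hg : ContinuousOn g (Icc α β))
    (hF : ∀ t ∈ Icc α β, HasDerivWithinAt F (g t) (Icc α β) t) :
    ∫ s in α..β, g s = F β - F α := by
  refine intervalIntegral.integral_eq_sub_of_hasDeriv_right_of_le hab
    (fun t ht => (hF t ht).continuousWithinAt) (fun t ht => ?_) ?_
  · refine (hF t (Ioo_subset_Icc_self ht)).mono_of_mem_nhdsWithin ?_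
    rw [mem_nhdsWithin]
    exact ⟨Iio β, isOpen_Iio, ht.2,
      fun x hx => ⟨le_of_lt (lt_of_le_of_lt (le_of_lt ht.1) hx.2), le_of_lt hx.1⟩⟩
  · exact ContinuousOn.intervalIntegrable (by rwa [uIcc_of_le hab])

lemma int_pos {v : ℝ → ℝ} (hv : ContinuousOn v (Icc 0 1))
    (h0 : ∀ t ∈ Icc (0:ℝ) 1, 0 ≤ v t)
    {t₀ : ℝ} (ht₀ : t₀ ∈ Icc (0:ℝ) 1) (hp : 0 < v t₀) :
    0 < ∫ s in (0:ℝ)..1, v s := by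
  set ε : ℝ := v t₀ / 2 with hε
  have hεpos : 0 < ε := by positivity
  have hmem : {x | ε < v x} ∈ nhdsWithin t₀ (Icc 0 1) := by
    have h' : Ioi ε ∈ nhds (v t₀) := Ioi_mem_nhds (by rw [hε]; linarith)
    have := (hv t₀ ht₀) h'
    simpa [Set.preimage, Set.mem_Ioi] using this
  rw [mem_nhdsWithin] at hmem
  obtain ⟨U, hUopen, ht₀U, hUsub⟩ := hmem
  obtain ⟨δ, hδpos, hball⟩ := Metric.isOpen_iff.1 hUopen t₀ ht₀U
  set α : ℝ := max 0 (t₀ - δ/2) with hα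
  set β : ℝ := min 1 (t₀ + δ/2) with hβ
  have hα0 : 0 ≤ α := le_max_left _ _
  have hβ1 : β ≤ 1 := min_le_left _ _
  have hαt : α ≤ t₀ := max_le ht₀.1 (by linarith)
  have htβ : t₀ ≤ β := le_min ht₀.2 (by linarith)
  have hαβ : α < β := by
    rcases lt_or_ge t₀ 1 with h | h
    · exact lt_of_le_of_lt hαt (lt_min h (by linarith))
    · have ht1 : t₀ = 1 := le_antisymm ht₀.2 h
      refine lt_of_lt_of_le (max_lt ?_ ?_) htβ <;> rw [ht1] <;> linarith
  have hsub : Icc α β ⊆ Icc 0 1 := Icc_subset_Icc hα0 hβ1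
  have hmid : ∀ x ∈ Icc α β, ε ≤ v x := by
    intro x hx
    have hxI : x ∈ Icc (0:ℝ) 1 := hsub hx
    have h1 : t₀ - δ/2 ≤ x := le_trans (le_max_right _ _) hx.1
    have h2 : x ≤ t₀ + δ/2 := le_trans hx.2 (min_le_right _ _)
    have hdist : dist x t₀ < δ := by
      rw [Real.dist_eq, abs_lt]; constructor <;> linarith
    exact le_of_lt (hUsub ⟨hball hdist, hxI⟩)
  have hi1 : IntervalIntegrable v volume 0 α :=
    ContinuousOn.intervalIntegrable
      (by rw [uIcc_of_le hα0]; exact hv.mono (Icc_subset_Icc le_rfl (le_trans hαt ht₀.2)))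
  have hi2 : IntervalIntegrable v volume α β :=
    ContinuousOn.intervalIntegrable (by rw [uIcc_of_le (le_of_lt hαβ)]; exact hv.mono hsub)
  have hi3 : IntervalIntegrable v volume β 1 :=
    ContinuousOn.intervalIntegrable (by
      rw [uIcc_of_le hβ1]
      exact hv.mono (Icc_subset_Icc (le_trans hα0 (le_of_lt hαβ)) le_rfl))
  have hsplit : (∫ s in (0:ℝ)..1, v s)
      = (∫ s in (0:ℝ)..α, v s) + ((∫ s in α..β, v s) + ∫ s in β..1, v s) := by
    rw [intervalIntegral.integral_add_adjacent_intervals hi2 hi3,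
      intervalIntegral.integral_add_adjacent_intervals hi1 (hi2.trans hi3)]
  have hn1 : 0 ≤ ∫ s in (0:ℝ)..α, v s :=
    intervalIntegral.integral_nonneg hα0
      (fun u hu => h0 u ⟨hu.1, le_trans hu.2 (le_trans hαt ht₀.2)⟩)
  have hn3 : 0 ≤ ∫ s in β..1, v s :=
    intervalIntegral.integral_nonneg hβ1
      (fun u hu => h0 u ⟨le_trans (le_trans hα0 (le_of_lt hαβ)) hu.1, hu.2⟩)
  have hn2 : (β - α) * ε ≤ ∫ s in α..β, v s := by
    have h := intervalIntegral.integral_mono_on (le_of_lt hαβ)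
      (intervalIntegrable_const (c := ε)) hi2 hmid
    rwa [intervalIntegral.integral_const, smul_eq_mul] at h
  have : 0 < (β - α) * ε := by
    have : 0 < β - α := by linarith
    positivity
  linarith

set_option maxHeartbeats 1000000 in
lemma key (A B γ : ℝ → ℝ) (hA : Continuous A) (hB : Continuous B) (hγ : Continuous γ)
    (hd : ∀ t ∈ Icc (0:ℝ) 1,
      HasDerivWithinAt γ (A t * γ t ^ 3 + B t * γ t ^ 2) (Icc (0:ℝ) 1) t)
    (hper : γ 0 = γ 1) (hn : γ 0 ≠ 0)
    (a b : ℝ) (hf0 : ∀ t ∈ Icc (0:ℝ) 1, 0 ≤ a * A t + b * B t)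
    {t₀ : ℝ} (ht₀ : t₀ ∈ Icc (0:ℝ) 1) (hft₀ : 0 < a * A t₀ + b * B t₀) :
    (∫ t in (0:ℝ)..1, (3 * A t * γ t ^ 2 + 2 * B t * γ t)) ≠ 0 := by
  have h01 : (0:ℝ) ∈ Icc (0:ℝ) 1 := by norm_num
  have h11 : (1:ℝ) ∈ Icc (0:ℝ) 1 := by norm_num
  -- Step A : γ never vanishes on [0,1]
  set c : ℝ → ℝ := fun t => A t * γ t ^ 2 + B t * γ t with hc
  have hcc : Continuous c := by fun_prop
  set C : ℝ → ℝ := fun u => ∫ s in (0:ℝ)..u, c s with hC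
  have hCd : ∀ t, HasDerivAt C (c t) t := ftc1 hcc
  have hCc : Continuous C := by
    rw [continuous_iff_continuousAt]; exact fun t => (hCd t).continuousAt
  have hh : ∀ t ∈ Icc (0:ℝ) 1,
      HasDerivWithinAt (fun s => γ s * Real.exp (-(C s))) 0 (Icc (0:ℝ) 1) t := by
    intro t ht
    have h1 := (hd t ht).mul (((hCd t).hasDerivWithinAt.neg).exp)
    refine h1.congr_deriv ?_
    simp only [hc]
    ring
  have hconst : ∀ t ∈ Icc (0:ℝ) 1, γ t * Real.exp (-(C t)) = γ 0 * Real.exp (-(C 0)) := by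
    refine constant_of_has_deriv_right_zero ((hγ.mul (hCc.neg.rexp)).continuousOn) ?_
    intro x hx
    refine (hh x (Ico_subset_Icc_self hx)).mono_of_mem_nhdsWithin ?_
    rw [mem_nhdsWithin]
    exact ⟨Iio 1, isOpen_Iio, hx.2, fun y hy => ⟨le_trans hx.1 hy.2, le_of_lt hy.1⟩⟩
  have hγne : ∀ t ∈ Icc (0:ℝ) 1, γ t ≠ 0 := by
    intro t ht h0
    have h1 := hconst t ht
    rw [h0, zero_mul] at h1
    rcases mul_eq_zero.1 h1.symm with h | h
    · exact hn h
    · exact Real.exp_ne_zero _ h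
  -- Step B : a - b γ t never vanishes on [0,1]
  have hT : ∀ t ∈ Icc (0:ℝ) 1, a - b * γ t ≠ 0 := by
    by_cases hb : b = 0
    · have ha : a ≠ 0 := by
        rintro rfl
        rw [hb] at hft₀
        simp at hft₀
      intro t ht
      rw [hb]
      simpa using ha
    · -- b ≠ 0
      set g : ℝ → ℝ := fun t => A t * γ t ^ 2 with hg
      have hgc : Continuous g := by fun_prop
      set G : ℝ → ℝ := fun s => ∫ x in (0:ℝ)..s, g x with hG
      have hGd : ∀ t, HasDerivAt G (g t) t := ftc1 hgc
      have hGc : Continuous G := by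
        rw [continuous_iff_continuousAt]; exact fun t => (hGd t).continuousAt
      set v : ℝ → ℝ := fun t => (a * A t + b * B t) * γ t ^ 2 / b * Real.exp (-(G t)) with hv
      have hvc : Continuous v := by fun_prop
      set u : ℝ → ℝ := fun t => (γ t - a / b) * Real.exp (-(G t)) with hu
      have hud : ∀ t ∈ Icc (0:ℝ) 1, HasDerivWithinAt u (v t) (Icc (0:ℝ) 1) t := by
        intro t ht
        have h1 := ((hd t ht).sub_const (a / b)).mul (((hGd t).hasDerivWithinAt.neg).exp)
        refine h1.congr_deriv ?_
        simp only [hv, hg, Pi.neg_apply]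
        field_simp
        ring
      have hsub : ∀ p q : ℝ, p ∈ Icc (0:ℝ) 1 → q ∈ Icc (0:ℝ) 1 → p ≤ q →
          ∫ s in p..q, v s = u q - u p := by
        intro p q hp hq hpq
        exact ftc2 hpq (hvc.continuousOn)
          (fun t ht => (hud t (Icc_subset_Icc hp.1 hq.2 ht)).mono
            (Icc_subset_Icc hp.1 hq.2))
      intro τ hτ hTz
      have hψτ : γ τ = a / b := by field_simp; linarith
      have huτ : u τ = 0 := by simp [hu, hψτ]
      have J1 := hsub 0 τ h01 hτ hτ.1
      have J2 := hsub τ 1 hτ h11 hτ.2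
      have Jf := hsub 0 1 h01 h11 zero_le_one
      rw [huτ] at J1 J2
      have hu1 : u 1 = (γ 0 - a / b) * Real.exp (-(G 1)) := by
        simp only [hu, hper]
      have hu0 : u 0 = (γ 0 - a / b) * Real.exp (-(G 0)) := by simp only [hu]
      have hEpos : (0:ℝ) < Real.exp (-(G 1)) := Real.exp_pos _
      have hE0pos : (0:ℝ) < Real.exp (-(G 0)) := Real.exp_pos _
      have hγsq : 0 < γ t₀ ^ 2 :=
        lt_of_le_of_ne (sq_nonneg _) (Ne.symm (pow_ne_zero _ (hγne t₀ ht₀)))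
      rcases lt_or_gt_of_ne hb with hbneg | hbpos
      · -- b < 0 : v ≤ 0 on [0,1], v t₀ < 0
        have hvle : ∀ t ∈ Icc (0:ℝ) 1, v t ≤ 0 := by
          intro t ht
          have h1 : 0 ≤ (a * A t + b * B t) * γ t ^ 2 :=
            mul_nonneg (hf0 t ht) (sq_nonneg _)
          have hdiv : (a * A t + b * B t) * γ t ^ 2 / b ≤ 0 :=
            div_nonpos_iff.2 (Or.inl ⟨h1, le_of_lt hbneg⟩)
          exact mul_nonpos_iff.2 (Or.inr ⟨hdiv, le_of_lt (Real.exp_pos _)⟩)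
        have hvt₀ : v t₀ < 0 := by
          have h1 : 0 < (a * A t₀ + b * B t₀) * γ t₀ ^ 2 := mul_pos hft₀ hγsq
          exact mul_neg_of_neg_of_pos (div_neg_of_pos_of_neg h1 hbneg) (Real.exp_pos _)
        have hIneg : (∫ s in (0:ℝ)..1, v s) < 0 := by
          have h := int_pos (v := fun s => -(v s)) (hvc.neg.continuousOn)
            (fun t ht => neg_nonneg.2 (hvle t ht)) ht₀ (neg_pos.2 hvt₀)
          rw [intervalIntegral.integral_neg] at h
          linarith
        have hJ1le : (∫ s in (0:ℝ)..τ, v s) ≤ 0 := by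
          have h := intervalIntegral.integral_nonneg (f := fun s => -(v s)) (μ := volume) hτ.1
            (fun x hx => neg_nonneg.2 (hvle x ⟨hx.1, le_trans hx.2 hτ.2⟩))
          rw [intervalIntegral.integral_neg] at h
          linarith
        have hJ2le : (∫ s in τ..1, v s) ≤ 0 := by
          have h := intervalIntegral.integral_nonneg (f := fun s => -(v s)) (μ := volume) hτ.2
            (fun x hx => neg_nonneg.2 (hvle x ⟨le_trans hτ.1 hx.1, hx.2⟩))
          rw [intervalIntegral.integral_neg] at h
          linarith
        have hψ0 : γ 0 - a / b = 0 := by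
          have hge : 0 ≤ (γ 0 - a / b) * Real.exp (-(G 0)) := by
            rw [← hu0]; linarith [J1, hJ1le]
          have hle2 : (γ 0 - a / b) * Real.exp (-(G 1)) ≤ 0 := by
            rw [← hu1]; linarith [J2, hJ2le]
          nlinarith
        rw [Jf, hu1, hu0, hψ0] at hIneg
        simp at hIneg
      · -- b > 0 : v ≥ 0 on [0,1], v t₀ > 0
        have hvge : ∀ t ∈ Icc (0:ℝ) 1, 0 ≤ v t := by
          intro t ht
          have h1 : 0 ≤ (a * A t + b * B t) * γ t ^ 2 :=
            mul_nonneg (hf0 t ht) (sq_nonneg _)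
          exact mul_nonneg (div_nonneg h1 (le_of_lt hbpos)) (le_of_lt (Real.exp_pos _))
        have hvt₀ : 0 < v t₀ := by
          have h1 : 0 < (a * A t₀ + b * B t₀) * γ t₀ ^ 2 := mul_pos hft₀ hγsq
          exact mul_pos (div_pos h1 hbpos) (Real.exp_pos _)
        have hIpos : 0 < ∫ s in (0:ℝ)..1, v s :=
          int_pos (hvc.continuousOn) hvge ht₀ hvt₀
        have hJ1ge : 0 ≤ ∫ s in (0:ℝ)..τ, v s :=
          intervalIntegral.integral_nonneg hτ.1
            (fun x hx => hvge x ⟨hx.1, le_trans hx.2 hτ.2⟩)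
        have hJ2ge : 0 ≤ ∫ s in τ..1, v s :=
          intervalIntegral.integral_nonneg hτ.2
            (fun x hx => hvge x ⟨le_trans hτ.1 hx.1, hx.2⟩)
        have hψ0 : γ 0 - a / b = 0 := by
          have hle2 : (γ 0 - a / b) * Real.exp (-(G 0)) ≤ 0 := by
            rw [← hu0]; linarith [J1, hJ1ge]
          have hge : 0 ≤ (γ 0 - a / b) * Real.exp (-(G 1)) := by
            rw [← hu1]; linarith [J2, hJ2ge]
          nlinarith
        rw [Jf, hu1, hu0, hψ0] at hIpos
        simp at hIpos
  -- Step C : a - b γ has constant sign on [0,1]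
  have hTc : Continuous (fun t => a - b * γ t) := by fun_prop
  have hTsign : (∀ t ∈ Icc (0:ℝ) 1, 0 < a - b * γ t) ∨
      (∀ t ∈ Icc (0:ℝ) 1, a - b * γ t < 0) := by
    rcases lt_or_gt_of_ne (hT 0 h01) with h0 | h0
    · right
      intro t ht
      by_contra hle
      push_neg at hle
      have hlt : 0 < a - b * γ t := lt_of_le_of_ne hle (Ne.symm (hT t ht))
      have hIVT := intermediate_value_uIcc (a := (0:ℝ)) (b := t)
        (f := fun s => a - b * γ s) (hTc.continuousOn)
      have h0mem : (0:ℝ) ∈ uIcc (a - b * γ 0) (a - b * γ t) := by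
        rw [Set.mem_uIcc]; left; exact ⟨le_of_lt h0, le_of_lt hlt⟩
      obtain ⟨τ, hτmem, hτ0⟩ := hIVT h0mem
      have hτI : τ ∈ Icc (0:ℝ) 1 := by
        rw [uIcc_of_le ht.1] at hτmem
        exact ⟨hτmem.1, le_trans hτmem.2 ht.2⟩
      exact hT τ hτI hτ0
    · left
      intro t ht
      by_contra hle
      push_neg at hle
      have hlt : a - b * γ t < 0 := lt_of_le_of_ne hle (hT t ht)
      have hIVT := intermediate_value_uIcc (a := (0:ℝ)) (b := t)
        (f := fun s => a - b * γ s) (hTc.continuousOn)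
      have h0mem : (0:ℝ) ∈ uIcc (a - b * γ 0) (a - b * γ t) := by
        rw [Set.mem_uIcc]; right; exact ⟨le_of_lt hlt, le_of_lt h0⟩
      obtain ⟨τ, hτmem, hτ0⟩ := hIVT h0mem
      have hτI : τ ∈ Icc (0:ℝ) 1 := by
        rw [uIcc_of_le ht.1] at hτmem
        exact ⟨hτmem.1, le_trans hτmem.2 ht.2⟩
      exact hT τ hτI hτ0
  -- Step D : the characteristic exponent equals ∫ w with w of constant sign
  set w : ℝ → ℝ := fun t => (a * A t + b * B t) * γ t ^ 2 / (a - b * γ t) with hw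
  have hwc : ContinuousOn w (Icc 0 1) :=
    ContinuousOn.div (Continuous.continuousOn (by fun_prop)) (hTc.continuousOn) hT
  have hΦd : ∀ t ∈ Icc (0:ℝ) 1,
      HasDerivWithinAt (fun s => 2 * Real.log (γ s) + Real.log (a - b * γ s))
        (3 * A t * γ t ^ 2 + 2 * B t * γ t - w t) (Icc (0:ℝ) 1) t := by
    intro t ht
    have hlog1 := ((hd t ht).log (hγne t ht)).const_mul (2:ℝ)
    have hTd : HasDerivWithinAt (fun s => a - b * γ s)
        (-(b * (A t * γ t ^ 3 + B t * γ t ^ 2))) (Icc (0:ℝ) 1) t :=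
      ((hd t ht).const_mul b).const_sub a
    have hlog2 := hTd.log (hT t ht)
    have h1 := hlog1.add hlog2
    refine h1.congr_deriv ?_
    simp only [hw]
    have h2 := hγne t ht
    have h3 := hT t ht
    field_simp
    have h3' : -(γ t * b) + a ≠ 0 := fun h => h3 (by linarith)
    ring_nf
    have hD : (-(γ t * b) + a)⁻¹ * (-(γ t * b) + a) = 1 := inv_mul_cancel₀ h3'
    linear_combination (A t * γ t) * hD
  have hXc : Continuous (fun t => 3 * A t * γ t ^ 2 + 2 * B t * γ t) := by fun_prop
  have hFTC := ftc2 zero_le_one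
    (g := fun t => 3 * A t * γ t ^ 2 + 2 * B t * γ t - w t)
    (ContinuousOn.sub (hXc.continuousOn) hwc) hΦd
  have h0 : (∫ t in (0:ℝ)..1, (3 * A t * γ t ^ 2 + 2 * B t * γ t - w t)) = 0 := by
    rw [hFTC]
    simp only [← hper]
    ring
  have hiX : IntervalIntegrable (fun t => 3 * A t * γ t ^ 2 + 2 * B t * γ t) volume 0 1 :=
    hXc.intervalIntegrable _ _
  have hiw : IntervalIntegrable w volume 0 1 :=
    ContinuousOn.intervalIntegrable (by rw [uIcc_of_le zero_le_one]; exact hwc)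
  have hsplit : (∫ t in (0:ℝ)..1, (3 * A t * γ t ^ 2 + 2 * B t * γ t))
      = ∫ t in (0:ℝ)..1, w t := by
    have h2 := intervalIntegral.integral_sub hiX hiw
    rw [h2] at h0
    linarith
  have hγsq : 0 < γ t₀ ^ 2 :=
    lt_of_le_of_ne (sq_nonneg _) (Ne.symm (pow_ne_zero _ (hγne t₀ ht₀)))
  rcases hTsign with hpos | hneg
  · have hwpos : 0 < ∫ t in (0:ℝ)..1, w t := by
      refine int_pos hwc (fun t ht => div_nonneg (mul_nonneg (hf0 t ht) (sq_nonneg _))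
        (le_of_lt (hpos t ht))) ht₀ ?_
      exact div_pos (mul_pos hft₀ hγsq) (hpos t₀ ht₀)
    rw [hsplit]
    exact ne_of_gt hwpos
  · have hwneg : (∫ t in (0:ℝ)..1, w t) < 0 := by
      have h := int_pos (v := fun t => -(w t)) (hwc.neg)
        (fun t ht => by
          have : w t ≤ 0 := div_nonpos_iff.2 (Or.inl
            ⟨mul_nonneg (hf0 t ht) (sq_nonneg _), le_of_lt (hneg t ht)⟩)
          show (0:ℝ) ≤ -(w t)
          linarith) ht₀ (by
          have : w t₀ < 0 := div_neg_of_pos_of_neg (mul_pos hft₀ hγsq) (hneg t₀ ht₀)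
          show (0:ℝ) < -(w t₀)
          linarith)
      rw [intervalIntegral.integral_neg] at h
      linarith
    rw [hsplit]
    exact ne_of_lt hwneg


/-- Transfer: clamp everything to `[0,1]` and apply `key`. -/
lemma main (A B : ℝ → ℝ)
    (hA : ContinuousOn A (Set.Icc 0 1)) (hB : ContinuousOn B (Set.Icc 0 1))
    (a b : ℝ)
    (hf0 : ∀ t ∈ Set.Icc (0:ℝ) 1, 0 ≤ a * A t + b * B t)
    {t₀ : ℝ} (ht₀ : t₀ ∈ Set.Icc (0:ℝ) 1) (hft₀ : 0 < a * A t₀ + b * B t₀)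
    (γ : ℝ → ℝ) (hγ : IsPeriodicOrbit A B γ) (hn : γ 0 ≠ 0) :
    IsHyperbolic A B γ := by
  set π : ℝ → ℝ := fun t => max 0 (min 1 t) with hπ
  have hπc : Continuous π := continuous_const.max (continuous_const.min continuous_id)
  have hπmem : ∀ t, π t ∈ Icc (0:ℝ) 1 :=
    fun t => ⟨le_max_left _ _, max_le zero_le_one (min_le_left _ _)⟩
  have hπeq : ∀ t ∈ Icc (0:ℝ) 1, π t = t := by
    intro t ht
    simp only [hπ]
    rw [min_eq_right ht.2, max_eq_right ht.1]
  have hγcOn : ContinuousOn γ (Icc 0 1) :=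
    fun t ht => (hγ.1 t ht).continuousWithinAt
  set AA : ℝ → ℝ := fun t => A (π t) with hAA
  set BB : ℝ → ℝ := fun t => B (π t) with hBB
  set gg : ℝ → ℝ := fun t => γ (π t) with hgg
  have hAAc : Continuous AA := hA.comp_continuous hπc hπmem
  have hBBc : Continuous BB := hB.comp_continuous hπc hπmem
  have hggc : Continuous gg := hγcOn.comp_continuous hπc hπmem
  have hAAeq : ∀ t ∈ Icc (0:ℝ) 1, AA t = A t := fun t ht => by rw [hAA]; simp only; rw [hπeq t ht]
  have hBBeq : ∀ t ∈ Icc (0:ℝ) 1, BB t = B t := fun t ht => by rw [hBB]; simp only; rw [hπeq t ht]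
  have hggeq : ∀ t ∈ Icc (0:ℝ) 1, gg t = γ t := fun t ht => by rw [hgg]; simp only; rw [hπeq t ht]
  have hd' : ∀ t ∈ Icc (0:ℝ) 1,
      HasDerivWithinAt gg (AA t * gg t ^ 3 + BB t * gg t ^ 2) (Icc (0:ℝ) 1) t := by
    intro t ht
    have h1 := (hγ.1 t ht).congr hggeq (hggeq t ht)
    rw [hAAeq t ht, hBBeq t ht, hggeq t ht]
    exact h1
  have hper' : gg 0 = gg 1 := by
    rw [hggeq 0 (by norm_num), hggeq 1 (by norm_num)]
    exact hγ.2
  have hn' : gg 0 ≠ 0 := by rw [hggeq 0 (by norm_num)]; exact hn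
  have hf0' : ∀ t ∈ Icc (0:ℝ) 1, 0 ≤ a * AA t + b * BB t := by
    intro t ht
    rw [hAAeq t ht, hBBeq t ht]
    exact hf0 t ht
  have hft₀' : 0 < a * AA t₀ + b * BB t₀ := by
    rw [hAAeq t₀ ht₀, hBBeq t₀ ht₀]
    exact hft₀
  have hkey := key AA BB gg hAAc hBBc hggc hd' hper' hn' a b hf0' ht₀ hft₀'
  unfold IsHyperbolic
  have hcongr : (∫ t in (0:ℝ)..1, (3 * A t * γ t ^ 2 + 2 * B t * γ t))
      = ∫ t in (0:ℝ)..1, (3 * AA t * gg t ^ 2 + 2 * BB t * gg t) := by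
    refine intervalIntegral.integral_congr ?_
    intro x hx
    rw [uIcc_of_le zero_le_one] at hx
    simp only
    rw [hAAeq x hx, hBBeq x hx, hggeq x hx]
  rw [hcongr]
  exact hkey

end AbelHypAux

theorem abel_nonzero_periodic_orbit_hyperbolic
    (A B : ℝ → ℝ)
    (hA : ContinuousOn A (Set.Icc 0 1)) (hB : ContinuousOn B (Set.Icc 0 1))
    (a b : ℝ)
    (h_not_ident_zero : ¬ ∀ t ∈ Set.Icc (0:ℝ) 1, a * A t + b * B t = 0)
    (h_sign : (∀ t ∈ Set.Icc (0:ℝ) 1, 0 ≤ a * A t + b * B t) ∨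
              (∀ t ∈ Set.Icc (0:ℝ) 1, a * A t + b * B t ≤ 0))
    (γ : ℝ → ℝ)
    (hγ : IsPeriodicOrbit A B γ) (hn : γ 0 ≠ 0) :
    IsHyperbolic A B γ := by
  push_neg at h_not_ident_zero
  obtain ⟨t₁, ht₁, hft₁⟩ := h_not_ident_zero
  rcases h_sign with hpos | hneg
  · exact AbelHypAux.main A B hA hB a b hpos ht₁ (lt_of_le_of_ne (hpos t₁ ht₁) (Ne.symm hft₁)) γ hγ hn
  · refine AbelHypAux.main A B hA hB (-a) (-b) ?_ ht₁ ?_ γ hγ hn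
    · intro t ht
      have := hneg t ht
      nlinarith
    · have h1 := hneg t₁ ht₁
      have h2 : a * A t₁ + b * B t₁ < 0 := lt_of_le_of_ne h1 hft₁
      nlinarith
end

section
/- Let A, B : [0,1] → ℝ be continuous and let a, b be real numbers with b ≠ 0 and a/b > 0 such that h(t) := (a·A(t) + b·B(t))/b satisfies h(t) ≥ 0 for all t ∈ [0,1] and h is not identically zero. Then for the Abel equation x' = A(t)x³ + B(t)x²: (i) if ∫₀¹ A(t) dt < 0, every periodic orbit γ with γ(0) ≠ 0 satisfies γ(t) > a/b for all t ∈ [0,1]; (ii) if ∫₀¹ A(t) dt > 0 and ∫₀¹ B(t) dt > 0, every periodic orbit γ with γ(0) ≠ 0 satisfies γ(t) < 0 for all t ∈ [0,1]; (iii) if ∫₀¹ A(t) dt > 0 and ∫₀¹ B(t) dt < 0, there exists a periodic orbit γ with 0 < γ(t) < a/b for all t ∈ [0,1]. -/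
open Set MeasureTheory intervalIntegral

namespace AbelAux

noncomputable def itg (w : ℝ → ℝ) (t : ℝ) : ℝ := ∫ s in (0:ℝ)..t, w s
noncomputable def pr (t : ℝ) : ℝ := max 0 (min t 1)
noncomputable def cl (r x : ℝ) : ℝ := max 0 (min x r)

lemma continuous_pr : Continuous pr :=
  continuous_const.max (continuous_id.min continuous_const)

lemma pr_mem (t : ℝ) : pr t ∈ Icc (0:ℝ) 1 :=
  ⟨le_max_left _ _, max_le (by norm_num) (min_le_right _ _)⟩

lemma pr_eq {t : ℝ} (ht : t ∈ Icc (0:ℝ) 1) : pr t = t := by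
  unfold pr; rw [min_eq_left ht.2, max_eq_right ht.1]

lemma cont_comp_pr {f : ℝ → ℝ} (hf : ContinuousOn f (Icc 0 1)) :
    Continuous (fun t => f (pr t)) :=
  hf.comp_continuous continuous_pr pr_mem

lemma cl_mem {r : ℝ} (hr : 0 ≤ r) (x : ℝ) : cl r x ∈ Icc 0 r :=
  ⟨le_max_left _ _, max_le hr (min_le_right _ _)⟩

lemma cl_eq {r x : ℝ} (hx : x ∈ Icc 0 r) : cl r x = x := by
  unfold cl; rw [min_eq_left hx.2, max_eq_right hx.1]

lemma cl_lip (r x y : ℝ) : |cl r x - cl r y| ≤ |x - y| := by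
  unfold cl
  calc |max 0 (min x r) - max 0 (min y r)|
      ≤ max |0 - 0| |min x r - min y r| := abs_max_sub_max_le_max _ _ _ _
    _ ≤ max |0 - 0| (max |x - y| |r - r|) := by
        exact max_le_max le_rfl (abs_min_sub_min_le_max _ _ _ _)
    _ ≤ |x - y| := by simp

lemma cl_mono {r x y : ℝ} (h : x ≤ y) : cl r x ≤ cl r y :=
  max_le_max le_rfl (min_le_min h le_rfl)

lemma cl_eq_of_gt {r x : ℝ} (hr : 0 ≤ r) (h : r < x) : cl r x = r := by
  unfold cl; rw [min_eq_right h.le, max_eq_right hr]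

lemma cl_eq_of_neg {r x : ℝ} (hr : 0 ≤ r) (h : x < 0) : cl r x = 0 := by
  unfold cl; rw [min_eq_left (h.le.trans hr), max_eq_left h.le]



lemma hasDerivAt_itg {w : ℝ → ℝ} (hw : Continuous w) (t : ℝ) :
    HasDerivAt (itg w) (w t) t :=
  integral_hasDerivAt_right (hw.intervalIntegrable _ _)
    hw.stronglyMeasurable.stronglyMeasurableAtFilter hw.continuousAt

lemma mono_mul_exp {w : ℝ → ℝ} (hw : Continuous w) {g d : ℝ → ℝ} {t0 t1 : ℝ}
    (hg : ∀ t ∈ Icc t0 t1, HasDerivWithinAt g (d t) (Icc t0 t1) t)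
    (hge : ∀ t ∈ Icc t0 t1, w t * g t ≤ d t) :
    MonotoneOn (fun t => g t * Real.exp (-(itg w t))) (Icc t0 t1) := by
  have hEc : Continuous (fun s => Real.exp (-(itg w s))) := by
    apply Real.continuous_exp.comp
    apply Continuous.neg
    exact continuous_iff_continuousAt.2 fun t => (hasDerivAt_itg hw t).continuousAt
  have hE : ∀ t : ℝ, HasDerivAt (fun s => Real.exp (-(itg w s)))
      (Real.exp (-(itg w t)) * (-(w t))) t := fun t => ((hasDerivAt_itg hw t).neg).exp
  have hgc : ContinuousOn g (Icc t0 t1) := fun t ht => (hg t ht).continuousWithinAt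
  have hcont : ContinuousOn (fun t => g t * Real.exp (-(itg w t))) (Icc t0 t1) :=
    hgc.mul hEc.continuousOn
  have hIoo : interior (Icc t0 t1) = Ioo t0 t1 := interior_Icc
  apply monotoneOn_of_hasDerivWithinAt_nonneg (convex_Icc t0 t1) hcont
    (f' := fun t => (d t - w t * g t) * Real.exp (-(itg w t)))
  · intro x hx
    rw [hIoo] at hx
    have hx' : x ∈ Icc t0 t1 := Ioo_subset_Icc_self hx
    have h1 : HasDerivWithinAt g (d x) (interior (Icc t0 t1)) x := by
      rw [hIoo]; exact (hg x hx').mono Ioo_subset_Icc_self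
    have := h1.fun_mul ((hE x).hasDerivWithinAt)
    refine this.congr_deriv ?_
    ring
  · intro x hx
    rw [hIoo] at hx
    have hx' : x ∈ Icc t0 t1 := Ioo_subset_Icc_self hx
    have := hge x hx'
    have he : 0 ≤ Real.exp (-(itg w x)) := (Real.exp_pos _).le
    nlinarith

lemma eq_exp {w : ℝ → ℝ} (hw : Continuous w) {g d : ℝ → ℝ} {t0 t1 : ℝ}
    (hg : ∀ t ∈ Icc t0 t1, HasDerivWithinAt g (d t) (Icc t0 t1) t)
    (hge : ∀ t ∈ Icc t0 t1, d t = w t * g t) :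
    ∀ s ∈ Icc t0 t1, ∀ t ∈ Icc t0 t1,
      g t * Real.exp (-(itg w t)) = g s * Real.exp (-(itg w s)) := by
  have m1 := mono_mul_exp hw hg (fun t ht => (hge t ht).ge)
  have m2 : MonotoneOn (fun t => (-g t) * Real.exp (-(itg w t))) (Icc t0 t1) := by
    apply mono_mul_exp hw (d := fun t => -(d t)) (fun t ht => (hg t ht).neg)
    intro t ht
    rw [hge t ht]; simp
  intro s hs t ht
  rcases le_total s t with hle | hle
  · have h1 : g s * Real.exp (-(itg w s)) ≤ g t * Real.exp (-(itg w t)) := m1 hs ht hle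
    have h2 : -g s * Real.exp (-(itg w s)) ≤ -g t * Real.exp (-(itg w t)) := m2 hs ht hle
    nlinarith [h1, h2]
  · have h1 : g t * Real.exp (-(itg w t)) ≤ g s * Real.exp (-(itg w s)) := m1 ht hs hle
    have h2 : -g t * Real.exp (-(itg w t)) ≤ -g s * Real.exp (-(itg w s)) := m2 ht hs hle
    nlinarith [h1, h2]


lemma itg_const (c t : ℝ) : itg (fun _ => c) t = t * c := by
  unfold itg
  rw [intervalIntegral.integral_const]
  simp

lemma gronwall_eq {L : ℝ} (hL : 0 ≤ L) {g1 g2 d1 d2 : ℝ → ℝ} {t0 t1 : ℝ}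
    (hg1 : ∀ t ∈ Icc t0 t1, HasDerivWithinAt g1 (d1 t) (Icc t0 t1) t)
    (hg2 : ∀ t ∈ Icc t0 t1, HasDerivWithinAt g2 (d2 t) (Icc t0 t1) t)
    (hlip : ∀ t ∈ Icc t0 t1, |d1 t - d2 t| ≤ L * |g1 t - g2 t|)
    {τ : ℝ} (hτ : τ ∈ Icc t0 t1) (heq : g1 τ = g2 τ) :
    ∀ t ∈ Icc t0 t1, g1 t = g2 t := by
  set η : ℝ → ℝ := fun t => (g1 t - g2 t)^2 with hη
  set dη : ℝ → ℝ := fun t => 2*(g1 t - g2 t)*(d1 t - d2 t) with hdη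
  have hderiv : ∀ t ∈ Icc t0 t1, HasDerivWithinAt η (dη t) (Icc t0 t1) t := by
    intro t ht
    have h := ((hg1 t ht).fun_sub (hg2 t ht)).fun_pow 2
    refine h.congr_deriv ?_
    simp only [hdη]
    push_cast
    ring
  have hbound : ∀ t ∈ Icc t0 t1, |dη t| ≤ 2 * L * η t := by
    intro t ht
    have h1 := hlip t ht
    have h2 : |dη t| = 2 * (|g1 t - g2 t| * |d1 t - d2 t|) := by
      simp [hdη, abs_mul, abs_of_nonneg, mul_assoc]
    have h3 : |g1 t - g2 t| * |d1 t - d2 t| ≤ |g1 t - g2 t| * (L * |g1 t - g2 t|) :=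
      mul_le_mul_of_nonneg_left h1 (abs_nonneg _)
    have h4 : |g1 t - g2 t| * |g1 t - g2 t| = η t := by
      rw [← abs_mul, hη]; simp [sq_abs, pow_two]
    nlinarith [h2, h3, h4]
  have m1 := mono_mul_exp (w := fun _ => -(2*L)) continuous_const hderiv
    (fun t ht => by
      have hb := hbound t ht
      show -(2*L) * η t ≤ dη t
      linarith [neg_abs_le (dη t)])
  have m2 := mono_mul_exp (w := fun _ => (2*L)) (g := fun t => -η t)
    (d := fun t => -(dη t)) continuous_const (fun t ht => (hderiv t ht).neg)
    (fun t ht => by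
      have hb := hbound t ht
      show (2*L) * (-η t) ≤ -(dη t)
      linarith [le_abs_self (dη t)])
  have hτ0 : η τ = 0 := by simp [hη, heq]
  intro t ht
  have hkey : η t ≤ 0 := by
    rcases le_total t τ with hle | hle
    · have := m1 ht hτ hle
      have h1 : η t * Real.exp (-(itg (fun _ => -(2*L)) t)) ≤
          η τ * Real.exp (-(itg (fun _ => -(2*L)) τ)) := this
      rw [hτ0] at h1
      have := Real.exp_pos (-(itg (fun _ => -(2*L)) t))
      nlinarith
    · have := m2 hτ ht hle
      have h1 : -η τ * Real.exp (-(itg (fun _ => 2*L) τ)) ≤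
          -η t * Real.exp (-(itg (fun _ => 2*L) t)) := this
      rw [hτ0] at h1
      have := Real.exp_pos (-(itg (fun _ => 2*L) t))
      nlinarith
  have : η t = 0 := le_antisymm hkey (sq_nonneg _)
  have := pow_eq_zero_iff (n := 2) (by norm_num) |>.1 this
  linarith [sub_eq_zero.1 this]

lemma ftc {F f : ℝ → ℝ}
    (hF : ∀ t ∈ Icc (0:ℝ) 1, HasDerivWithinAt F (f t) (Icc 0 1) t)
    (hf : ContinuousOn f (Icc 0 1)) :
    ∫ t in (0:ℝ)..1, f t = F 1 - F 0 := by
  apply intervalIntegral.integral_eq_sub_of_hasDeriv_right_of_le (by norm_num)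
  · exact fun t ht => (hF t ht).continuousWithinAt
  · intro x hx
    exact ((hF x (Ioo_subset_Icc_self hx)).hasDerivAt
      (Icc_mem_nhds hx.1 hx.2)).hasDerivWithinAt
  · apply ContinuousOn.intervalIntegrable
    rwa [Set.uIcc_of_le (by norm_num : (0:ℝ) ≤ 1)]

lemma intble {f : ℝ → ℝ} (hf : ContinuousOn f (Icc 0 1)) :
    IntervalIntegrable f MeasureTheory.volume 0 1 := by
  apply ContinuousOn.intervalIntegrable
  rwa [Set.uIcc_of_le (by norm_num : (0:ℝ) ≤ 1)]




lemma exists_rep {A B γ : ℝ → ℝ} (hA : ContinuousOn A (Icc 0 1))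
    (hB : ContinuousOn B (Icc 0 1))
    (hγ : ∀ t ∈ Icc (0:ℝ) 1,
      HasDerivWithinAt γ (A t * γ t ^ 3 + B t * γ t ^ 2) (Icc (0:ℝ) 1) t) :
    ∃ q : ℝ → ℝ, Continuous q ∧
      (∀ t ∈ Icc (0:ℝ) 1, q t = A t * γ t ^ 2 + B t * γ t) ∧
      ∀ s ∈ Icc (0:ℝ) 1, ∀ t ∈ Icc (0:ℝ) 1,
        γ t = γ s * Real.exp (itg q t - itg q s) := by
  have hγc : ContinuousOn γ (Icc 0 1) := fun t ht => (hγ t ht).continuousWithinAt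
  set q : ℝ → ℝ := fun t => A (pr t) * (γ (pr t)) ^ 2 + B (pr t) * (γ (pr t)) with hq
  have hqc : Continuous q := by
    apply Continuous.add
    · exact (cont_comp_pr hA).mul ((cont_comp_pr hγc).pow 2)
    · exact (cont_comp_pr hB).mul (cont_comp_pr hγc)
  have hqeq : ∀ t ∈ Icc (0:ℝ) 1, q t = A t * γ t ^ 2 + B t * γ t := by
    intro t ht; simp only [hq, pr_eq ht]
  refine ⟨q, hqc, hqeq, ?_⟩
  have key := eq_exp hqc hγ (fun t ht => by rw [hqeq t ht]; ring)
  intro s hs t ht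
  have hx := key s hs t ht
  have h2 : γ t * Real.exp (-(itg q t)) * Real.exp (itg q t)
      = γ s * Real.exp (-(itg q s)) * Real.exp (itg q t) := by rw [hx]
  rw [mul_assoc, ← Real.exp_add, neg_add_cancel, Real.exp_zero, mul_one] at h2
  rw [h2, Real.exp_sub, Real.exp_neg]
  ring


lemma barrier {A B γ : ℝ → ℝ} {r : ℝ} (hA : ContinuousOn A (Icc 0 1))
    (hB : ContinuousOn B (Icc 0 1)) (hr : 0 < r)
    (hpos : ∀ t ∈ Icc (0:ℝ) 1, 0 ≤ r * A t + B t)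
    (hγ : ∀ t ∈ Icc (0:ℝ) 1,
      HasDerivWithinAt γ (A t * γ t ^ 3 + B t * γ t ^ 2) (Icc (0:ℝ) 1) t) :
    (γ 1 < r → ∀ t ∈ Icc (0:ℝ) 1, γ t < r) ∧
    (r < γ 0 → ∀ t ∈ Icc (0:ℝ) 1, r < γ t) ∧
    (γ 0 = r → γ 1 = r → ∀ t ∈ Icc (0:ℝ) 1, γ t = r) := by
  have hγc : ContinuousOn γ (Icc 0 1) := fun t ht => (hγ t ht).continuousWithinAt
  set p : ℝ → ℝ := fun t => A (pr t) * (γ (pr t)) ^ 2 with hp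
  have hpc : Continuous p := (cont_comp_pr hA).mul ((cont_comp_pr hγc).pow 2)
  have hm : MonotoneOn (fun t => (γ t - r) * Real.exp (-(itg p t))) (Icc 0 1) := by
    apply mono_mul_exp hpc (d := fun t => A t * γ t ^ 3 + B t * γ t ^ 2)
      (fun t ht => (hγ t ht).sub_const r)
    intro t ht
    have h1 : p t = A t * γ t ^ 2 := by simp only [hp, pr_eq ht]
    have h2 : 0 ≤ γ t ^ 2 * (r * A t + B t) := mul_nonneg (sq_nonneg _) (hpos t ht)
    rw [h1]; nlinarith
  have h0 : (0:ℝ) ∈ Icc (0:ℝ) 1 := by norm_num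
  have h1 : (1:ℝ) ∈ Icc (0:ℝ) 1 := by norm_num
  refine ⟨?_, ?_, ?_⟩
  · intro hlt t ht
    have hx : (γ t - r) * Real.exp (-(itg p t)) ≤ (γ 1 - r) * Real.exp (-(itg p 1)) :=
      hm ht h1 ht.2
    have hE := Real.exp_pos (-(itg p t))
    have hE1 := Real.exp_pos (-(itg p 1))
    have hend : (γ 1 - r) * Real.exp (-(itg p 1)) < 0 :=
      mul_neg_of_neg_of_pos (by linarith) hE1
    nlinarith [hx]
  · intro hgt t ht
    have hx : (γ 0 - r) * Real.exp (-(itg p 0)) ≤ (γ t - r) * Real.exp (-(itg p t)) :=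
      hm h0 ht ht.1
    have hE := Real.exp_pos (-(itg p t))
    have hE0 := Real.exp_pos (-(itg p 0))
    have hstart : 0 < (γ 0 - r) * Real.exp (-(itg p 0)) :=
      mul_pos (by linarith) hE0
    nlinarith [hx]
  · intro he0 he1 t ht
    have hu : (γ 0 - r) * Real.exp (-(itg p 0)) ≤ (γ t - r) * Real.exp (-(itg p t)) :=
      hm h0 ht ht.1
    have hv : (γ t - r) * Real.exp (-(itg p t)) ≤ (γ 1 - r) * Real.exp (-(itg p 1)) :=
      hm ht h1 ht.2
    have hE := Real.exp_pos (-(itg p t))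
    have hz0 : (γ 0 - r) * Real.exp (-(itg p 0)) = 0 := by rw [he0]; ring
    have hz1 : (γ 1 - r) * Real.exp (-(itg p 1)) = 0 := by rw [he1]; ring
    rw [hz0] at hu; rw [hz1] at hv
    nlinarith [hu, hv]

lemma h_vanish {A B γ : ℝ → ℝ} {r : ℝ} (hr : r ≠ 0)
    (hγ : ∀ t ∈ Icc (0:ℝ) 1,
      HasDerivWithinAt γ (A t * γ t ^ 3 + B t * γ t ^ 2) (Icc (0:ℝ) 1) t)
    (heq : ∀ t ∈ Icc (0:ℝ) 1, γ t = r) :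
    ∀ t ∈ Icc (0:ℝ) 1, r * A t + B t = 0 := by
  intro t ht
  have hconst : HasDerivWithinAt γ 0 (Icc (0:ℝ) 1) t :=
    (hasDerivWithinAt_const t (Icc (0:ℝ) 1) r).congr heq (heq t ht)
  have hud : UniqueDiffWithinAt ℝ (Icc (0:ℝ) 1) t :=
    (uniqueDiffOn_Icc (by norm_num : (0:ℝ) < 1)) t ht
  have h1 := (hγ t ht).derivWithin hud
  have h2 := hconst.derivWithin hud
  rw [h1] at h2
  rw [heq t ht] at h2
  have hr2 : r ^ 2 ≠ 0 := pow_ne_zero _ hr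
  have : r ^ 2 * (r * A t + B t) = 0 := by rw [← h2]; ring
  exact (mul_eq_zero.1 this).resolve_left hr2

lemma identity3 {A B γ : ℝ → ℝ} (hA : ContinuousOn A (Icc 0 1))
    (hB : ContinuousOn B (Icc 0 1))
    (hγ : ∀ t ∈ Icc (0:ℝ) 1,
      HasDerivWithinAt γ (A t * γ t ^ 3 + B t * γ t ^ 2) (Icc (0:ℝ) 1) t)
    (hne : ∀ t ∈ Icc (0:ℝ) 1, γ t ≠ 0) :
    ∫ t in (0:ℝ)..1, (A t * γ t + B t) = -(γ 1)⁻¹ - (-(γ 0)⁻¹) := by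
  have hγc : ContinuousOn γ (Icc 0 1) := fun t ht => (hγ t ht).continuousWithinAt
  apply ftc (F := fun t => -(γ t)⁻¹) (f := fun t => A t * γ t + B t)
  · intro t ht
    have hg : HasDerivAt (fun x : ℝ => -x⁻¹) ((γ t ^ 2)⁻¹) (γ t) := by
      have := (hasDerivAt_inv (hne t ht)).neg
      simpa [Pi.neg_def] using this
    have hcomp := hg.comp_hasDerivWithinAt t (hγ t ht)
    have heq : (γ t ^ 2)⁻¹ * (A t * γ t ^ 3 + B t * γ t ^ 2) = A t * γ t + B t := by
      field_simp [hne t ht]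
    rw [heq] at hcomp
    exact hcomp
  · exact (hA.mul hγc).add hB

lemma identity1 {A B γ : ℝ → ℝ} {r : ℝ} (hA : ContinuousOn A (Icc 0 1))
    (hB : ContinuousOn B (Icc 0 1)) (hr : r ≠ 0)
    (hγ : ∀ t ∈ Icc (0:ℝ) 1,
      HasDerivWithinAt γ (A t * γ t ^ 3 + B t * γ t ^ 2) (Icc (0:ℝ) 1) t)
    (hne : ∀ t ∈ Icc (0:ℝ) 1, γ t ≠ 0) (hner : ∀ t ∈ Icc (0:ℝ) 1, γ t ≠ r)
    (hper : γ 0 = γ 1) :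
    ∫ t in (0:ℝ)..1, (A t + (r * A t + B t) / (γ t - r)) = 0 := by
  have hγc : ContinuousOn γ (Icc 0 1) := fun t ht => (hγ t ht).continuousWithinAt
  set G : ℝ → ℝ := fun x => (Real.log (x - r) - Real.log x) / r ^ 2 + (r * x)⁻¹ with hG
  have key : ∫ t in (0:ℝ)..1, (A t + (r * A t + B t) / (γ t - r))
      = G (γ 1) - G (γ 0) := by
    apply ftc (F := fun t => G (γ t))
      (f := fun t => A t + (r * A t + B t) / (γ t - r))
    · intro t ht
      have hner' : γ t - r ≠ 0 := sub_ne_zero.2 (hner t ht)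
      have h1 : HasDerivAt (fun x : ℝ => Real.log (x - r)) (1 / (γ t - r)) (γ t) := by
        have := ((hasDerivAt_id (γ t)).sub_const r).log hner'
        simpa using this
      have h2 : HasDerivAt Real.log (1 / γ t) (γ t) := by
        have := (hasDerivAt_id (γ t)).log (hne t ht)
        simpa using this
      have h3 : HasDerivAt (fun x : ℝ => (r * x)⁻¹) (-r / (r * γ t) ^ 2) (γ t) := by
        have := ((hasDerivAt_id (γ t)).const_mul r).inv
          (mul_ne_zero hr (hne t ht))
        simpa [Pi.inv_def] using this
      have hg : HasDerivAt G (((1 / (γ t - r)) - 1 / γ t) / r ^ 2 + -r / (r * γ t) ^ 2)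
          (γ t) := ((h1.sub h2).div_const (r ^ 2)).add h3
      have hcomp := hg.comp_hasDerivWithinAt t (hγ t ht)
      have heq : (((1 / (γ t - r)) - 1 / γ t) / r ^ 2 + -r / (r * γ t) ^ 2)
          * (A t * γ t ^ 3 + B t * γ t ^ 2)
          = A t + (r * A t + B t) / (γ t - r) := by
        field_simp [hne t ht, hner', hr]
        ring
      rw [heq] at hcomp
      exact hcomp
    · apply hA.add
      apply ContinuousOn.div
      · exact (hA.const_smul r).add hB
      · exact hγc.sub continuousOn_const
      · exact fun t ht => sub_ne_zero.2 (hner t ht)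
  rw [key, hper, sub_self]

lemma identity2 {A B γ : ℝ → ℝ} {r : ℝ} (hA : ContinuousOn A (Icc 0 1))
    (hB : ContinuousOn B (Icc 0 1)) (hr : r ≠ 0)
    (hγ : ∀ t ∈ Icc (0:ℝ) 1,
      HasDerivWithinAt γ (A t * γ t ^ 3 + B t * γ t ^ 2) (Icc (0:ℝ) 1) t)
    (hne : ∀ t ∈ Icc (0:ℝ) 1, γ t ≠ 0) (hner : ∀ t ∈ Icc (0:ℝ) 1, γ t ≠ r)
    (hper : γ 0 = γ 1) :
    ∫ t in (0:ℝ)..1, (A t * γ t + (r * A t + B t) * γ t / (γ t - r)) = 0 := by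
  have hγc : ContinuousOn γ (Icc 0 1) := fun t ht => (hγ t ht).continuousWithinAt
  set G : ℝ → ℝ := fun x => (Real.log (x - r) - Real.log x) / r with hG
  have key : ∫ t in (0:ℝ)..1, (A t * γ t + (r * A t + B t) * γ t / (γ t - r))
      = G (γ 1) - G (γ 0) := by
    apply ftc (F := fun t => G (γ t))
      (f := fun t => A t * γ t + (r * A t + B t) * γ t / (γ t - r))
    · intro t ht
      have hner' : γ t - r ≠ 0 := sub_ne_zero.2 (hner t ht)
      have h1 : HasDerivAt (fun x : ℝ => Real.log (x - r)) (1 / (γ t - r)) (γ t) := by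
        have := ((hasDerivAt_id (γ t)).sub_const r).log hner'
        simpa using this
      have h2 : HasDerivAt Real.log (1 / γ t) (γ t) := by
        have := (hasDerivAt_id (γ t)).log (hne t ht)
        simpa using this
      have hg : HasDerivAt G (((1 / (γ t - r)) - 1 / γ t) / r) (γ t) :=
        (h1.sub h2).div_const r
      have hcomp := hg.comp_hasDerivWithinAt t (hγ t ht)
      have heq : (((1 / (γ t - r)) - 1 / γ t) / r) * (A t * γ t ^ 3 + B t * γ t ^ 2)
          = A t * γ t + (r * A t + B t) * γ t / (γ t - r) := by
        field_simp [hne t ht, hner', hr]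
        ring
      rw [heq] at hcomp
      exact hcomp
    · apply (hA.mul hγc).add
      apply ContinuousOn.div
      · exact ((hA.const_smul r).add hB).mul hγc
      · exact hγc.sub continuousOn_const
      · exact fun t ht => sub_ne_zero.2 (hner t ht)
  rw [key, hper, sub_self]

lemma exists_lip {A B : ℝ → ℝ} (hA : ContinuousOn A (Icc 0 1))
    (hB : ContinuousOn B (Icc 0 1)) {r : ℝ} (hr : 0 < r) :
    ∃ L C : ℝ, 0 ≤ L ∧ 0 ≤ C ∧
      (∀ t x, |A (pr t) * (cl r x) ^ 3 + B (pr t) * (cl r x) ^ 2| ≤ C) ∧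
      (∀ t x y, |(A (pr t) * (cl r x) ^ 3 + B (pr t) * (cl r x) ^ 2) -
        (A (pr t) * (cl r y) ^ 3 + B (pr t) * (cl r y) ^ 2)| ≤ L * |x - y|) := by
  obtain ⟨Ma, hMa⟩ := isCompact_Icc.exists_bound_of_continuousOn hA
  obtain ⟨Mb, hMb⟩ := isCompact_Icc.exists_bound_of_continuousOn hB
  have h01 : (0:ℝ) ∈ Icc (0:ℝ) 1 := by norm_num
  have hMa0 : 0 ≤ Ma := (norm_nonneg _).trans (hMa 0 h01)
  have hMb0 : 0 ≤ Mb := (norm_nonneg _).trans (hMb 0 h01)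
  have hA' : ∀ t, |A (pr t)| ≤ Ma := fun t => hMa _ (pr_mem t)
  have hB' : ∀ t, |B (pr t)| ≤ Mb := fun t => hMb _ (pr_mem t)
  have cube : ∀ x y : ℝ, |(cl r x) ^ 3 - (cl r y) ^ 3| ≤ 3 * r ^ 2 * |x - y| := by
    intro x y
    have hu := cl_mem hr.le x
    have hv := cl_mem hr.le y
    have h1 : (cl r x) ^ 3 - (cl r y) ^ 3
        = (cl r x - cl r y) * ((cl r x) ^ 2 + cl r x * cl r y + (cl r y) ^ 2) := by ring
    rw [h1, abs_mul]
    have h2 : |cl r x - cl r y| ≤ |x - y| := cl_lip r x y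
    have h3 : |(cl r x) ^ 2 + cl r x * cl r y + (cl r y) ^ 2| ≤ 3 * r ^ 2 := by
      rw [abs_of_nonneg (by nlinarith [hu.1, hv.1])]
      nlinarith [hu.1, hu.2, hv.1, hv.2]
    calc |cl r x - cl r y| * |(cl r x) ^ 2 + cl r x * cl r y + (cl r y) ^ 2|
        ≤ |x - y| * (3 * r ^ 2) := mul_le_mul h2 h3 (abs_nonneg _) (abs_nonneg _)
      _ = 3 * r ^ 2 * |x - y| := by ring
  have sqd : ∀ x y : ℝ, |(cl r x) ^ 2 - (cl r y) ^ 2| ≤ 2 * r * |x - y| := by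
    intro x y
    have hu := cl_mem hr.le x
    have hv := cl_mem hr.le y
    have h1 : (cl r x) ^ 2 - (cl r y) ^ 2
        = (cl r x - cl r y) * (cl r x + cl r y) := by ring
    rw [h1, abs_mul]
    have h2 : |cl r x - cl r y| ≤ |x - y| := cl_lip r x y
    have h3 : |cl r x + cl r y| ≤ 2 * r := by
      rw [abs_of_nonneg (by linarith [hu.1, hv.1])]
      linarith [hu.2, hv.2]
    calc |cl r x - cl r y| * |cl r x + cl r y|
        ≤ |x - y| * (2 * r) := mul_le_mul h2 h3 (abs_nonneg _) (abs_nonneg _)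
      _ = 2 * r * |x - y| := by ring
  refine ⟨Ma * (3 * r ^ 2) + Mb * (2 * r), Ma * r ^ 3 + Mb * r ^ 2,
    by positivity, by positivity, ?_, ?_⟩
  · intro t x
    have hu := cl_mem hr.le x
    calc |A (pr t) * (cl r x) ^ 3 + B (pr t) * (cl r x) ^ 2|
        ≤ |A (pr t) * (cl r x) ^ 3| + |B (pr t) * (cl r x) ^ 2| := abs_add_le _ _
      _ = |A (pr t)| * |(cl r x) ^ 3| + |B (pr t)| * |(cl r x) ^ 2| := by
          rw [abs_mul, abs_mul]
      _ ≤ Ma * r ^ 3 + Mb * r ^ 2 := by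
          have h3 : |(cl r x) ^ 3| ≤ r ^ 3 := by
            rw [abs_of_nonneg (pow_nonneg hu.1 3)]
            exact pow_le_pow_left₀ hu.1 hu.2 3
          have h2 : |(cl r x) ^ 2| ≤ r ^ 2 := by
            rw [abs_of_nonneg (by positivity)]
            exact pow_le_pow_left₀ hu.1 hu.2 2
          exact add_le_add
            (mul_le_mul (hA' t) h3 (abs_nonneg _) hMa0)
            (mul_le_mul (hB' t) h2 (abs_nonneg _) hMb0)
  · intro t x y
    have step1 : |(A (pr t) * (cl r x) ^ 3 + B (pr t) * (cl r x) ^ 2) -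
        (A (pr t) * (cl r y) ^ 3 + B (pr t) * (cl r y) ^ 2)|
        = |A (pr t) * ((cl r x) ^ 3 - (cl r y) ^ 3)
          + B (pr t) * ((cl r x) ^ 2 - (cl r y) ^ 2)| := by
      congr 1; ring
    rw [step1]
    calc |A (pr t) * ((cl r x) ^ 3 - (cl r y) ^ 3)
          + B (pr t) * ((cl r x) ^ 2 - (cl r y) ^ 2)|
        ≤ |A (pr t) * ((cl r x) ^ 3 - (cl r y) ^ 3)|
          + |B (pr t) * ((cl r x) ^ 2 - (cl r y) ^ 2)| := abs_add_le _ _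
      _ = |A (pr t)| * |(cl r x) ^ 3 - (cl r y) ^ 3|
          + |B (pr t)| * |(cl r x) ^ 2 - (cl r y) ^ 2| := by rw [abs_mul, abs_mul]
      _ ≤ Ma * (3 * r ^ 2 * |x - y|) + Mb * (2 * r * |x - y|) :=
          add_le_add
            (mul_le_mul (hA' t) (cube x y) (abs_nonneg _) hMa0)
            (mul_le_mul (hB' t) (sqd x y) (abs_nonneg _) hMb0)
      _ = (Ma * (3 * r ^ 2) + Mb * (2 * r)) * |x - y| := by ring

lemma exists_clamped_sol {A B : ℝ → ℝ} (hA : ContinuousOn A (Icc 0 1))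
    (hB : ContinuousOn B (Icc 0 1)) {r : ℝ} (hr : 0 < r) (d : ℝ) (hd : d ∈ Icc 0 r) :
    ∃ f : ℝ → ℝ, f 1 = d ∧ ∀ t ∈ Icc (0:ℝ) 1, HasDerivWithinAt f
      (A (pr t) * (cl r (f t)) ^ 3 + B (pr t) * (cl r (f t)) ^ 2) (Icc (0:ℝ) 1) t := by
  obtain ⟨L, C, hL0, hC0, hbound, hlip⟩ := exists_lip hA hB hr
  set v : ℝ → ℝ → ℝ := fun t x => A (pr t) * (cl r x) ^ 3 + B (pr t) * (cl r x) ^ 2 with hv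
  have hpl : IsPicardLindelof v (tmin := 0) (tmax := 1) ⟨1, by norm_num⟩ d C.toNNReal 0
      C.toNNReal L.toNNReal := by
    constructor
    · intro t ht
      apply LipschitzOnWith.of_dist_le_mul
      intro x hx y hy
      rw [Real.dist_eq, Real.dist_eq, Real.coe_toNNReal _ hL0]
      exact hlip t x y
    · intro x hx
      apply Continuous.continuousOn
      exact ((cont_comp_pr hA).mul continuous_const).add
        ((cont_comp_pr hB).mul continuous_const)
    · intro t ht x hx
      rw [Real.norm_eq_abs, Real.coe_toNNReal _ hC0]
      exact hbound t x
    · norm_num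
  obtain ⟨f, hf1, hfd⟩ := hpl.exists_eq_forall_mem_Icc_hasDerivWithinAt₀
  exact ⟨f, hf1, hfd⟩

lemma trapped {A B f : ℝ → ℝ} {r : ℝ} (hr : 0 < r)
    (hpos : ∀ t ∈ Icc (0:ℝ) 1, 0 ≤ r * A t + B t)
    (hf : ∀ t ∈ Icc (0:ℝ) 1, HasDerivWithinAt f
      (A (pr t) * (cl r (f t)) ^ 3 + B (pr t) * (cl r (f t)) ^ 2) (Icc (0:ℝ) 1) t)
    (hend : f 1 ∈ Icc 0 r) :
    ∀ t ∈ Icc (0:ℝ) 1, f t ∈ Icc 0 r := by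
  have hfc : ContinuousOn f (Icc 0 1) := fun t ht => (hf t ht).continuousWithinAt
  have hup : ∀ t ∈ Icc (0:ℝ) 1, f t ≤ r := by
    by_contra hc
    push_neg at hc
    obtain ⟨t₀, ht₀, hft₀⟩ := hc
    set S := Icc t₀ 1 ∩ f ⁻¹' (Iic r) with hS
    have hsub : Icc t₀ 1 ⊆ Icc (0:ℝ) 1 := Icc_subset_Icc ht₀.1 le_rfl
    have hSc : IsClosed S :=
      (hfc.mono hsub).preimage_isClosed_of_isClosed isClosed_Icc isClosed_Iic
    have h1S : (1:ℝ) ∈ S := ⟨⟨ht₀.2, le_rfl⟩, hend.2⟩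
    have hbdd : BddBelow S := ⟨t₀, fun s hs => hs.1.1⟩
    set t₁ := sInf S with ht₁def
    have ht₁S : t₁ ∈ S := hSc.csInf_mem ⟨1, h1S⟩ hbdd
    have htle : t₀ ≤ t₁ := le_csInf ⟨1, h1S⟩ (fun s hs => hs.1.1)
    have ht₀₁ : t₀ < t₁ := by
      rcases lt_or_eq_of_le htle with h | h
      · exact h
      · exfalso
        have : t₁ ∈ S := ht₁S
        rw [← h] at this
        have := this.2
        simp only [mem_preimage, mem_Iic] at this
        linarith
    have hmid : ∀ s ∈ Ico t₀ t₁, r < f s := by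
      intro s hs
      by_contra hsr
      push_neg at hsr
      have hsS : s ∈ S := ⟨⟨hs.1, (hs.2.trans_le ht₁S.1.2).le⟩, hsr⟩
      exact absurd (csInf_le hbdd hsS) (not_le.2 hs.2)
    have hIccsub : Icc t₀ t₁ ⊆ Icc (0:ℝ) 1 := Icc_subset_Icc ht₀.1 ht₁S.1.2
    have hmono : MonotoneOn f (Icc t₀ t₁) := by
      apply monotoneOn_of_hasDerivWithinAt_nonneg (convex_Icc _ _) (hfc.mono hIccsub)
        (f' := fun s => A (pr s) * (cl r (f s)) ^ 3 + B (pr s) * (cl r (f s)) ^ 2)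
      · intro x hx
        rw [interior_Icc] at hx
        have hx1 : x ∈ Icc (0:ℝ) 1 := hIccsub (Ioo_subset_Icc_self hx)
        exact (hf x hx1).mono (by
          rw [interior_Icc]
          exact fun y hy => hIccsub (Ioo_subset_Icc_self hy))
      · intro x hx
        rw [interior_Icc] at hx
        have hx1 : x ∈ Icc (0:ℝ) 1 := hIccsub (Ioo_subset_Icc_self hx)
        have hfx : r < f x := hmid x ⟨hx.1.le, hx.2⟩
        rw [cl_eq_of_gt hr.le hfx, pr_eq hx1]
        have := hpos x hx1
        nlinarith
    have hle := hmono (left_mem_Icc.2 htle) (right_mem_Icc.2 htle) htle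
    have : f t₁ ≤ r := ht₁S.2
    linarith
  intro t ht
  refine ⟨?_, hup t ht⟩
  by_contra hc
  push_neg at hc
  set t₀ := t with ht₀def
  have ht₀ : t₀ ∈ Icc (0:ℝ) 1 := ht
  have hft₀ : f t₀ < 0 := hc
  set S := Icc t₀ 1 ∩ f ⁻¹' (Ici 0) with hS
  have hsub : Icc t₀ 1 ⊆ Icc (0:ℝ) 1 := Icc_subset_Icc ht₀.1 le_rfl
  have hSc : IsClosed S :=
    (hfc.mono hsub).preimage_isClosed_of_isClosed isClosed_Icc isClosed_Ici
  have h1S : (1:ℝ) ∈ S := ⟨⟨ht₀.2, le_rfl⟩, hend.1⟩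
  have hbdd : BddBelow S := ⟨t₀, fun s hs => hs.1.1⟩
  set t₁ := sInf S with ht₁def
  have ht₁S : t₁ ∈ S := hSc.csInf_mem ⟨1, h1S⟩ hbdd
  have htle : t₀ ≤ t₁ := le_csInf ⟨1, h1S⟩ (fun s hs => hs.1.1)
  have ht₀₁ : t₀ < t₁ := by
    rcases lt_or_eq_of_le htle with h | h
    · exact h
    · exfalso
      have : t₁ ∈ S := ht₁S
      rw [← h] at this
      have := this.2
      simp only [mem_preimage, mem_Ici] at this
      linarith
  have hmid : ∀ s ∈ Ico t₀ t₁, f s < 0 := by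
    intro s hs
    by_contra hsr
    push_neg at hsr
    have hsS : s ∈ S := ⟨⟨hs.1, (hs.2.trans_le ht₁S.1.2).le⟩, hsr⟩
    exact absurd (csInf_le hbdd hsS) (not_le.2 hs.2)
  have hIccsub : Icc t₀ t₁ ⊆ Icc (0:ℝ) 1 := Icc_subset_Icc ht₀.1 ht₁S.1.2
  have hmono : MonotoneOn (fun s => -f s) (Icc t₀ t₁) := by
    apply monotoneOn_of_hasDerivWithinAt_nonneg (convex_Icc _ _)
      ((hfc.mono hIccsub).neg)
      (f' := fun s => -(A (pr s) * (cl r (f s)) ^ 3 + B (pr s) * (cl r (f s)) ^ 2))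
    · intro x hx
      rw [interior_Icc] at hx
      have hx1 : x ∈ Icc (0:ℝ) 1 := hIccsub (Ioo_subset_Icc_self hx)
      exact ((hf x hx1).mono (by
        rw [interior_Icc]
        exact fun y hy => hIccsub (Ioo_subset_Icc_self hy))).neg
    · intro x hx
      rw [interior_Icc] at hx
      have hfx : f x < 0 := hmid x ⟨hx.1.le, hx.2⟩
      rw [cl_eq_of_neg hr.le hfx]
      norm_num
  have hle : -f t₀ ≤ -f t₁ := hmono (left_mem_Icc.2 htle) (right_mem_Icc.2 htle) htle
  have : (0:ℝ) ≤ f t₁ := ht₁S.2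
  linarith

end AbelAux

open AbelAux in
theorem abel_location_of_nonzero_periodic_orbit
    (A B : ℝ → ℝ)
    (hA : ContinuousOn A (Set.Icc 0 1)) (hB : ContinuousOn B (Set.Icc 0 1))
    (a b : ℝ) (hb : b ≠ 0) (hab : a / b > 0)
    (h_nonneg : ∀ t ∈ Set.Icc (0:ℝ) 1, 0 ≤ (a * A t + b * B t) / b)
    (h_not_ident_zero : ¬ ∀ t ∈ Set.Icc (0:ℝ) 1, (a * A t + b * B t) / b = 0) :
    ((∫ t in (0:ℝ)..1, A t) < 0 →
      ∀ γ : ℝ → ℝ, IsPeriodicOrbit A B γ → γ 0 ≠ 0 →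
        ∀ t ∈ Set.Icc (0:ℝ) 1, γ t > a / b) ∧
    ((0 < ∫ t in (0:ℝ)..1, A t) → (0 < ∫ t in (0:ℝ)..1, B t) →
      ∀ γ : ℝ → ℝ, IsPeriodicOrbit A B γ → γ 0 ≠ 0 →
        ∀ t ∈ Set.Icc (0:ℝ) 1, γ t < 0) ∧
    ((0 < ∫ t in (0:ℝ)..1, A t) → ((∫ t in (0:ℝ)..1, B t) < 0) →
      ∃ γ : ℝ → ℝ, IsPeriodicOrbit A B γ ∧
        ∀ t ∈ Set.Icc (0:ℝ) 1, 0 < γ t ∧ γ t < a / b) := by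
  set r := a / b with hrdef
  have hr : 0 < r := hab
  have hconv : ∀ t, (a * A t + b * B t) / b = r * A t + B t := by
    intro t
    rw [hrdef]
    field_simp
  have hnn : ∀ t ∈ Icc (0:ℝ) 1, 0 ≤ r * A t + B t := fun t ht =>
    (hconv t) ▸ h_nonneg t ht
  have hex : ∃ t ∈ Icc (0:ℝ) 1, r * A t + B t ≠ 0 := by
    by_contra hcon
    push_neg at hcon
    exact h_not_ident_zero (fun t ht => by rw [hconv t]; exact hcon t ht)
  have h0m : (0:ℝ) ∈ Icc (0:ℝ) 1 := by norm_num
  have h1m : (1:ℝ) ∈ Icc (0:ℝ) 1 := by norm_num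
  refine ⟨?_, ?_, ?_⟩
  -- Part (i)
  · intro hint γ hγper hγ0 t ht
    obtain ⟨hsol, hper⟩ := hγper
    have hγc : ContinuousOn γ (Icc 0 1) := fun s hs => (hsol s hs).continuousWithinAt
    obtain ⟨q, hqc, hqeq, hrep⟩ := exists_rep hA hB hsol
    have hnz : ∀ s ∈ Icc (0:ℝ) 1, γ s ≠ 0 := by
      intro s hs
      rw [hrep 0 h0m s hs]
      exact mul_ne_zero hγ0 (Real.exp_ne_zero _)
    obtain ⟨b1, b2, b3⟩ := barrier hA hB hr hnn hsol
    rcases lt_trichotomy (γ 0) r with hlt | heq | hgt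
    · exfalso
      have hltall : ∀ s ∈ Icc (0:ℝ) 1, γ s < r := b1 (hper ▸ hlt)
      have hner : ∀ s ∈ Icc (0:ℝ) 1, γ s ≠ r := fun s hs => ne_of_lt (hltall s hs)
      have hid := identity1 hA hB (ne_of_gt hr) hsol hnz hner hper
      have hi1 : IntervalIntegrable A MeasureTheory.volume 0 1 := intble hA
      have hi2 : IntervalIntegrable (fun s => (r * A s + B s) / (γ s - r))
          MeasureTheory.volume 0 1 := by
        apply intble
        exact ContinuousOn.div ((hA.const_smul r).add hB)
          (hγc.sub continuousOn_const) (fun s hs => sub_ne_zero.2 (hner s hs))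
      rw [intervalIntegral.integral_add hi1 hi2] at hid
      have hg_nonpos : (∫ s in (0:ℝ)..1, (r * A s + B s) / (γ s - r)) ≤ 0 := by
        have hnonneg : 0 ≤ ∫ s in (0:ℝ)..1, -((r * A s + B s) / (γ s - r)) := by
          apply intervalIntegral.integral_nonneg (by norm_num)
          intro u hu
          have h1 := hnn u hu
          have h2 := hltall u hu
          have : (r * A u + B u) / (γ u - r) ≤ 0 :=
            div_nonpos_iff.mpr (Or.inl ⟨h1, by linarith⟩)
          linarith
        rw [intervalIntegral.integral_neg] at hnonneg
        linarith
      linarith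
    · exfalso
      have hall : ∀ s ∈ Icc (0:ℝ) 1, γ s = r := b3 heq (hper ▸ heq)
      obtain ⟨s, hs, hsne⟩ := hex
      exact hsne (h_vanish (ne_of_gt hr) hsol hall s hs)
    · exact b2 hgt t ht
  -- Part (ii)
  · intro hA1 hB1 γ hγper hγ0 t ht
    obtain ⟨hsol, hper⟩ := hγper
    have hγc : ContinuousOn γ (Icc 0 1) := fun s hs => (hsol s hs).continuousWithinAt
    obtain ⟨q, hqc, hqeq, hrep⟩ := exists_rep hA hB hsol
    rcases lt_trichotomy (γ 0) 0 with hneg | hzero | hposγ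
    · rw [hrep 0 h0m t ht]
      exact mul_neg_of_neg_of_pos hneg (Real.exp_pos _)
    · exact absurd hzero hγ0
    · exfalso
      have hpos : ∀ s ∈ Icc (0:ℝ) 1, 0 < γ s := fun s hs => by
        rw [hrep 0 h0m s hs]; exact mul_pos hposγ (Real.exp_pos _)
      have hnz : ∀ s ∈ Icc (0:ℝ) 1, γ s ≠ 0 := fun s hs => ne_of_gt (hpos s hs)
      obtain ⟨b1, b2, b3⟩ := barrier hA hB hr hnn hsol
      rcases lt_trichotomy (γ 0) r with hlt | heq | hgt
      · have hltall : ∀ s ∈ Icc (0:ℝ) 1, γ s < r := b1 (hper ▸ hlt)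
        have hner : ∀ s ∈ Icc (0:ℝ) 1, γ s ≠ r := fun s hs => ne_of_lt (hltall s hs)
        have hid2 := identity2 hA hB (ne_of_gt hr) hsol hnz hner hper
        have hid3 := identity3 hA hB hsol hnz
        have hid3' : ∫ s in (0:ℝ)..1, (A s * γ s + B s) = 0 := by
          rw [hid3, hper]; ring
        have hiAγ : IntervalIntegrable (fun s => A s * γ s)
            MeasureTheory.volume 0 1 := intble (hA.mul hγc)
        have hiB : IntervalIntegrable B MeasureTheory.volume 0 1 := intble hB
        have hi2 : IntervalIntegrable (fun s => (r * A s + B s) * γ s / (γ s - r))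
            MeasureTheory.volume 0 1 := by
          apply intble
          exact ContinuousOn.div (((hA.const_smul r).add hB).mul hγc)
            (hγc.sub continuousOn_const) (fun s hs => sub_ne_zero.2 (hner s hs))
        rw [intervalIntegral.integral_add hiAγ hi2] at hid2
        rw [intervalIntegral.integral_add hiAγ hiB] at hid3'
        have hg_nonpos : (∫ s in (0:ℝ)..1, (r * A s + B s) * γ s / (γ s - r)) ≤ 0 := by
          have hnonneg : 0 ≤ ∫ s in (0:ℝ)..1, -((r * A s + B s) * γ s / (γ s - r)) := by
            apply intervalIntegral.integral_nonneg (by norm_num)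
            intro u hu
            have h1 : 0 ≤ (r * A u + B u) * γ u :=
              mul_nonneg (hnn u hu) (hpos u hu).le
            have h2 := hltall u hu
            have : (r * A u + B u) * γ u / (γ u - r) ≤ 0 :=
              div_nonpos_iff.mpr (Or.inl ⟨h1, by linarith⟩)
            linarith
          rw [intervalIntegral.integral_neg] at hnonneg
          linarith
        linarith
      · have hall : ∀ s ∈ Icc (0:ℝ) 1, γ s = r := b3 heq (hper ▸ heq)
        obtain ⟨s, hs, hsne⟩ := hex
        exact hsne (h_vanish (ne_of_gt hr) hsol hall s hs)
      · have hgtall : ∀ s ∈ Icc (0:ℝ) 1, r < γ s := b2 hgt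
        have hner : ∀ s ∈ Icc (0:ℝ) 1, γ s ≠ r := fun s hs => (hgtall s hs).ne'
        have hid := identity1 hA hB (ne_of_gt hr) hsol hnz hner hper
        have hi1 : IntervalIntegrable A MeasureTheory.volume 0 1 := intble hA
        have hi2 : IntervalIntegrable (fun s => (r * A s + B s) / (γ s - r))
            MeasureTheory.volume 0 1 := by
          apply intble
          exact ContinuousOn.div ((hA.const_smul r).add hB)
            (hγc.sub continuousOn_const) (fun s hs => sub_ne_zero.2 (hner s hs))
        rw [intervalIntegral.integral_add hi1 hi2] at hid
        have hg_nonneg : 0 ≤ ∫ s in (0:ℝ)..1, (r * A s + B s) / (γ s - r) := by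
          apply intervalIntegral.integral_nonneg (by norm_num)
          intro u hu
          have h1 := hnn u hu
          have h2 := hgtall u hu
          exact div_nonneg h1 (by linarith)
        linarith
  -- Part (iii)
  · intro hA1 hB1
    have hd_cl : ∀ d : ℝ, cl r d ∈ Icc 0 r := fun d => cl_mem hr.le d
    have hex_sol : ∀ d : ℝ, ∃ f : ℝ → ℝ, f 1 = cl r d ∧
        ∀ t ∈ Icc (0:ℝ) 1, HasDerivWithinAt f
          (A (pr t) * (cl r (f t)) ^ 3 + B (pr t) * (cl r (f t)) ^ 2)
          (Icc (0:ℝ) 1) t :=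
      fun d => exists_clamped_sol hA hB hr (cl r d) (hd_cl d)
    choose sol hsol1 hsolD using hex_sol
    have htrap : ∀ d, ∀ t ∈ Icc (0:ℝ) 1, sol d t ∈ Icc 0 r := fun d =>
      trapped hr hnn (hsolD d) ((hsol1 d) ▸ hd_cl d)
    have habel : ∀ d, ∀ t ∈ Icc (0:ℝ) 1, HasDerivWithinAt (sol d)
        (A t * (sol d t) ^ 3 + B t * (sol d t) ^ 2) (Icc (0:ℝ) 1) t := by
      intro d t ht
      have h := hsolD d t ht
      rwa [cl_eq (htrap d t ht), pr_eq ht] at h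
    set Ψ : ℝ → ℝ := fun d => sol d 0 with hΨ
    obtain ⟨L, C, hL0, hC0, hboundv, hlip⟩ := exists_lip hA hB hr
    have huniq : ∀ d₁ d₂ : ℝ, (∃ τ ∈ Icc (0:ℝ) 1, sol d₁ τ = sol d₂ τ) →
        sol d₁ 0 = sol d₂ 0 := by
      rintro d₁ d₂ ⟨τ, hτ, heq⟩
      exact gronwall_eq hL0 (hsolD d₁) (hsolD d₂)
        (fun s hs => hlip s (sol d₁ s) (sol d₂ s)) hτ heq 0 h0m
    have hmono : ∀ d₁ d₂ : ℝ, d₁ ≤ d₂ → Ψ d₁ ≤ Ψ d₂ := by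
      intro d₁ d₂ hle
      by_contra hcon
      push_neg at hcon
      have hc1 : ContinuousOn (sol d₁) (Icc 0 1) :=
        fun s hs => (hsolD d₁ s hs).continuousWithinAt
      have hc2 : ContinuousOn (sol d₂) (Icc 0 1) :=
        fun s hs => (hsolD d₂ s hs).continuousWithinAt
      have hφc : ContinuousOn (fun s => sol d₁ s - sol d₂ s) (Icc 0 1) := hc1.sub hc2
      have hiv := intermediate_value_Icc' (by norm_num : (0:ℝ) ≤ 1) hφc
      have h0mem : (0:ℝ) ∈ Icc (sol d₁ 1 - sol d₂ 1) (sol d₁ 0 - sol d₂ 0) := by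
        constructor
        · rw [hsol1 d₁, hsol1 d₂]
          have := cl_mono (r := r) hle
          linarith
        · have : Ψ d₂ < Ψ d₁ := hcon
          simp only [hΨ] at this
          linarith
      obtain ⟨τ, hτ, hτeq⟩ := hiv h0mem
      have heq0 : sol d₁ τ = sol d₂ τ := by
        have : sol d₁ τ - sol d₂ τ = 0 := hτeq
        linarith
      have := huniq d₁ d₂ ⟨τ, hτ, heq0⟩
      have hΨeq : Ψ d₁ = Ψ d₂ := this
      exact absurd hΨeq (ne_of_gt hcon)
    -- bounds for the smallness estimate
    obtain ⟨Ma, hMa⟩ := isCompact_Icc.exists_bound_of_continuousOn hA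
    obtain ⟨Mb, hMb⟩ := isCompact_Icc.exists_bound_of_continuousOn hB
    have hMa0 : 0 ≤ Ma := (norm_nonneg _).trans (hMa 0 h0m)
    have hMb0 : 0 ≤ Mb := (norm_nonneg _).trans (hMb 0 h0m)
    set M := Ma * r ^ 2 + Mb * r with hMdef
    have hM0 : 0 ≤ M := by positivity
    set IB := ∫ s in (0:ℝ)..1, B s with hIBdef
    set d₀ := min r ((-IB) / (Ma * Real.exp M + 1)) with hd₀def
    have hd₀r : d₀ ≤ r := min_le_left _ _
    have hd₀pos : 0 < d₀ := by
      apply lt_min hr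
      apply div_pos (by linarith) (by positivity)
    have hd₀mem : d₀ ∈ Icc 0 r := ⟨hd₀pos.le, hd₀r⟩
    have hf1 : sol d₀ 1 = d₀ := by rw [hsol1 d₀, cl_eq hd₀mem]
    obtain ⟨q, hqc, hqeq, hrep⟩ := exists_rep hA hB (habel d₀)
    have hfpos : ∀ s ∈ Icc (0:ℝ) 1, 0 < sol d₀ s := by
      intro s hs
      rw [hrep 1 h1m s hs, hf1]
      exact mul_pos hd₀pos (Real.exp_pos _)
    have hqb : ∀ s ∈ Icc (0:ℝ) 1, |q s| ≤ M := by
      intro s hs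
      rw [hqeq s hs]
      have htr := htrap d₀ s hs
      have hAs : |A s| ≤ Ma := hMa s hs
      have hBs : |B s| ≤ Mb := hMb s hs
      calc |A s * sol d₀ s ^ 2 + B s * sol d₀ s|
          ≤ |A s * sol d₀ s ^ 2| + |B s * sol d₀ s| := abs_add_le _ _
        _ = |A s| * |sol d₀ s ^ 2| + |B s| * |sol d₀ s| := by rw [abs_mul, abs_mul]
        _ ≤ Ma * r ^ 2 + Mb * r := by
            have h2 : |sol d₀ s ^ 2| ≤ r ^ 2 := by
              rw [abs_of_nonneg (sq_nonneg _)]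
              exact pow_le_pow_left₀ htr.1 htr.2 2
            have h1 : |sol d₀ s| ≤ r := by
              rw [abs_of_nonneg htr.1]; exact htr.2
            exact add_le_add (mul_le_mul hAs h2 (abs_nonneg _) hMa0)
              (mul_le_mul hBs h1 (abs_nonneg _) hMb0)
    have hexp : ∀ s ∈ Icc (0:ℝ) 1, itg q s - itg q 1 ≤ M := by
      intro s hs
      have hadj : itg q s + ∫ u in s..(1:ℝ), q u = itg q 1 :=
        intervalIntegral.integral_add_adjacent_intervals
          (hqc.intervalIntegrable 0 s) (hqc.intervalIntegrable s 1)
      have hb : ‖∫ u in s..(1:ℝ), q u‖ ≤ M * |1 - s| := by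
        apply intervalIntegral.norm_integral_le_of_norm_le_const
        intro x hx
        rw [Set.uIoc_of_le hs.2] at hx
        have hx1 : x ∈ Icc (0:ℝ) 1 := ⟨hs.1.trans hx.1.le, hx.2⟩
        rw [Real.norm_eq_abs]
        exact hqb x hx1
      have habs : |1 - s| ≤ 1 := by
        rw [abs_of_nonneg (by linarith [hs.2])]
        linarith [hs.1]
      have : |∫ u in s..(1:ℝ), q u| ≤ M := by
        rw [← Real.norm_eq_abs]
        calc ‖∫ u in s..(1:ℝ), q u‖ ≤ M * |1 - s| := hb
          _ ≤ M * 1 := by nlinarith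
          _ = M := mul_one M
      have h2 : itg q s - itg q 1 = -∫ u in s..(1:ℝ), q u := by linarith
      rw [h2]
      calc -∫ u in s..(1:ℝ), q u ≤ |∫ u in s..(1:ℝ), q u| := neg_le_abs _
        _ ≤ M := this
    have hsmall : ∀ s ∈ Icc (0:ℝ) 1, sol d₀ s ≤ d₀ * Real.exp M := by
      intro s hs
      rw [hrep 1 h1m s hs, hf1]
      exact mul_le_mul_of_nonneg_left
        (Real.exp_le_exp.2 (hexp s hs)) hd₀pos.le
    have hd₀Ψ : d₀ ≤ Ψ d₀ := by
      have hγc : ContinuousOn (sol d₀) (Icc 0 1) :=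
        fun s hs => (hsolD d₀ s hs).continuousWithinAt
      have hid := identity3 hA hB (habel d₀) (fun s hs => (hfpos s hs).ne')
      have hiAγ : IntervalIntegrable (fun s => A s * sol d₀ s)
          MeasureTheory.volume 0 1 := intble (hA.mul hγc)
      have hiB : IntervalIntegrable B MeasureTheory.volume 0 1 := intble hB
      rw [intervalIntegral.integral_add hiAγ hiB] at hid
      have hAfb : |∫ s in (0:ℝ)..1, A s * sol d₀ s| ≤ Ma * (d₀ * Real.exp M) := by
        rw [← Real.norm_eq_abs]
        have := intervalIntegral.norm_integral_le_of_norm_le_const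
          (C := Ma * (d₀ * Real.exp M)) (f := fun s => A s * sol d₀ s)
          (a := (0:ℝ)) (b := 1) ?_
        · calc ‖∫ s in (0:ℝ)..1, A s * sol d₀ s‖
              ≤ Ma * (d₀ * Real.exp M) * |1 - 0| := this
            _ = Ma * (d₀ * Real.exp M) := by norm_num
        · intro x hx
          rw [Set.uIoc_of_le (by norm_num : (0:ℝ) ≤ 1)] at hx
          have hx1 : x ∈ Icc (0:ℝ) 1 := ⟨hx.1.le, hx.2⟩
          rw [Real.norm_eq_abs, abs_mul]
          have h1 : |A x| ≤ Ma := hMa x hx1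
          have h2 : |sol d₀ x| ≤ d₀ * Real.exp M := by
            rw [abs_of_nonneg (htrap d₀ x hx1).1]
            exact hsmall x hx1
          exact mul_le_mul h1 h2 (abs_nonneg _) hMa0
      -- d₀ * (X + 1) ≤ -IB  where X = Ma * exp M
      have hdle : d₀ * (Ma * Real.exp M + 1) ≤ -IB := by
        have h1 : d₀ ≤ (-IB) / (Ma * Real.exp M + 1) := min_le_right _ _
        have h2 : (0:ℝ) < Ma * Real.exp M + 1 := by positivity
        calc d₀ * (Ma * Real.exp M + 1)
            ≤ ((-IB) / (Ma * Real.exp M + 1)) * (Ma * Real.exp M + 1) :=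
              mul_le_mul_of_nonneg_right h1 h2.le
          _ = -IB := div_mul_cancel₀ _ h2.ne'
      have hsum : (∫ s in (0:ℝ)..1, A s * sol d₀ s) + IB ≤ 0 := by
        have h1 : (∫ s in (0:ℝ)..1, A s * sol d₀ s) ≤ Ma * (d₀ * Real.exp M) :=
          (le_abs_self _).trans hAfb
        nlinarith [hd₀pos]
      -- hid : ∫Af + IB = -(f1)⁻¹ - (-(f0)⁻¹)
      have hinv : (sol d₀ 0)⁻¹ ≤ d₀⁻¹ := by
        have hrhs : -(sol d₀ 1)⁻¹ - (-(sol d₀ 0)⁻¹) = (sol d₀ 0)⁻¹ - d₀⁻¹ := by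
          rw [hf1]; ring
        rw [hrhs] at hid
        linarith
      have hf0pos : 0 < sol d₀ 0 := hfpos 0 h0m
      exact (inv_le_inv₀ hf0pos hd₀pos).1 hinv
    -- Tarski fixed point
    set S := {d : ℝ | d ∈ Icc 0 r ∧ d ≤ Ψ d} with hSdef
    have hd₀S : d₀ ∈ S := ⟨hd₀mem, hd₀Ψ⟩
    have hbddS : BddAbove S := ⟨r, fun x hx => hx.1.2⟩
    set c := sSup S with hcdef
    have hcd₀ : d₀ ≤ c := le_csSup hbddS hd₀S
    have hcr : c ≤ r := csSup_le ⟨d₀, hd₀S⟩ (fun x hx => hx.1.2)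
    have hcpos : 0 < c := lt_of_lt_of_le hd₀pos hcd₀
    have hc_mem : c ∈ Icc 0 r := ⟨hcpos.le, hcr⟩
    have hΨc_mem : Ψ c ∈ Icc 0 r := htrap c 0 h0m
    have step1 : c ≤ Ψ c := csSup_le ⟨d₀, hd₀S⟩
      (fun x hx => hx.2.trans (hmono x c (le_csSup hbddS hx)))
    have step2 : Ψ c ≤ c := le_csSup hbddS ⟨hΨc_mem, hmono c (Ψ c) step1⟩
    have hfix : Ψ c = c := le_antisymm step2 step1
    have hsc1 : sol c 1 = c := by rw [hsol1 c, cl_eq hc_mem]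
    have hsc0 : sol c 0 = c := hfix
    obtain ⟨b1, b2, b3⟩ := barrier hA hB hr hnn (habel c)
    have hclt : c < r := by
      rcases lt_or_eq_of_le hcr with h | h
      · exact h
      · exfalso
        have hall : ∀ s ∈ Icc (0:ℝ) 1, sol c s = r :=
          b3 (by rw [hsc0, h]) (by rw [hsc1, h])
        obtain ⟨s, hs, hsne⟩ := hex
        exact hsne (h_vanish (ne_of_gt hr) (habel c) hall s hs)
    obtain ⟨qc, hqcc, hqceq, hrepc⟩ := exists_rep hA hB (habel c)
    refine ⟨sol c, ⟨habel c, by rw [hsc0, hsc1]⟩, ?_⟩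
    intro t ht
    constructor
    · rw [hrepc 1 h1m t ht, hsc1]
      exact mul_pos hcpos (Real.exp_pos _)
    · exact b1 (by rw [hsc1]; exact hclt) t ht
end

section
/- Consider the Abel equation x' = (a₀ + a₁cos(2πt) + a₂sin(2πt))x³ + (b₀ + b₁cos(2πt) + b₂sin(2πt))x², with a₀, a₁, a₂, b₀, b₁, b₂ real numbers. This equation has a center at x = 0 if and only if a₀ = 0, b₀ = 0 and a₂b₁ − a₁b₂ = 0. -/
/-- The Abel equation has a center at `x = 0`: all solutions starting close enough
to `0` are defined on all of `[0,1]` and are periodic orbits. -/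
def HasCenterAtZero (A B : ℝ → ℝ) : Prop :=
  ∃ ε > (0:ℝ), ∀ ρ : ℝ, |ρ| < ε →
    ∃ γ : ℝ → ℝ, IsAbelSolution A B γ ∧ γ 0 = ρ ∧ γ 0 = γ 1

open Real Set MeasureTheory intervalIntegral
open scoped Interval

noncomputable section


lemma hasDerivAt_sin2pi (t : ℝ) :
    HasDerivAt (fun t : ℝ => Real.sin (2*π*t)) (2*π*Real.cos (2*π*t)) t := by
  have h : HasDerivAt (fun t : ℝ => 2*π*t) (2*π) t := by
    simpa using (hasDerivAt_id t).const_mul (2*π)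
  have H := (Real.hasDerivAt_sin (2*π*t)).comp t h
  refine H.congr_deriv ?_
  ring

lemma hasDerivAt_cos2pi (t : ℝ) :
    HasDerivAt (fun t : ℝ => Real.cos (2*π*t)) (-(2*π*Real.sin (2*π*t))) t := by
  have h : HasDerivAt (fun t : ℝ => 2*π*t) (2*π) t := by
    simpa using (hasDerivAt_id t).const_mul (2*π)
  have := (Real.hasDerivAt_cos (2*π*t)).comp t h
  refine this.congr_deriv ?_
  ring

/-- derivative of the primitive `w` of `c₁ cos(2πt) + c₂ sin(2πt)`. -/
lemma hasDerivAt_w (c₁ c₂ t : ℝ) :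
    HasDerivAt (fun t : ℝ => (c₁ * Real.sin (2*π*t) + c₂ * (1 - Real.cos (2*π*t))) / (2*π))
      (c₁ * Real.cos (2*π*t) + c₂ * Real.sin (2*π*t)) t := by
  have hs := (hasDerivAt_sin2pi t).const_mul c₁
  have hc := ((hasDerivAt_cos2pi t).const_mul c₂).const_sub c₂
  have h2 := (hs.add hc).div_const (2*π)
  have hπ : (2*π) ≠ 0 := by positivity
  have hfun : (fun t : ℝ => (c₁ * Real.sin (2*π*t) + c₂ * (1 - Real.cos (2*π*t))) / (2*π))
      = fun t : ℝ => (c₁ * Real.sin (2*π*t) + (c₂ - c₂ * Real.cos (2*π*t))) / (2*π) := by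
    funext x; ring
  rw [hfun]
  refine h2.congr_deriv ?_
  rw [div_eq_iff hπ]
  ring

lemma w_zero (c₁ c₂ : ℝ) :
    (c₁ * Real.sin (2*π*(0:ℝ)) + c₂ * (1 - Real.cos (2*π*(0:ℝ)))) / (2*π) = 0 := by
  norm_num

lemma w_one (c₁ c₂ : ℝ) :
    (c₁ * Real.sin (2*π*(1:ℝ)) + c₂ * (1 - Real.cos (2*π*(1:ℝ)))) / (2*π) = 0 := by
  norm_num [Real.sin_two_pi, Real.cos_two_pi]

lemma w_bound (c₁ c₂ t : ℝ) :
    |(c₁ * Real.sin (2*π*t) + c₂ * (1 - Real.cos (2*π*t))) / (2*π)| ≤ |c₁| + |c₂| := by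
  have hπ : (3:ℝ) ≤ π := by
    have := Real.pi_gt_three
    linarith
  have h1 : |Real.sin (2*π*t)| ≤ 1 := Real.abs_sin_le_one _
  have h2 : |1 - Real.cos (2*π*t)| ≤ 2 := by
    have h3 := Real.neg_one_le_cos (2*π*t)
    have h4 := Real.cos_le_one (2*π*t)
    rw [abs_le]; constructor <;> linarith
  have hnum : |c₁ * Real.sin (2*π*t) + c₂ * (1 - Real.cos (2*π*t))| ≤ |c₁| + 2*|c₂| := by
    calc |c₁ * Real.sin (2*π*t) + c₂ * (1 - Real.cos (2*π*t))|
        ≤ |c₁ * Real.sin (2*π*t)| + |c₂ * (1 - Real.cos (2*π*t))| := abs_add_le _ _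
      _ ≤ |c₁| * 1 + |c₂| * 2 := by
          rw [abs_mul, abs_mul]
          gcongr
      _ = |c₁| + 2*|c₂| := by ring
  rw [abs_div]
  have h2π : |(2*π)| = 2*π := abs_of_pos (by positivity)
  rw [h2π, div_le_iff₀ (by positivity)]
  nlinarith [abs_nonneg c₁, abs_nonneg c₂]

/-- The canonical trig-polynomial integral over one period. -/
lemma integral_trig_comb (p q r u v z : ℝ) :
    ∫ t in (0:ℝ)..1, (p + q * Real.cos (2*π*t) + r * Real.sin (2*π*t)
      + u * Real.cos (2*π*t)^2 + v * Real.sin (2*π*t)^2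
      + z * (Real.sin (2*π*t) * Real.cos (2*π*t))) = p + u/2 + v/2 := by
  have hπ : (2*π) ≠ 0 := by positivity
  set F : ℝ → ℝ := fun t => p*t + q * Real.sin (2*π*t)/(2*π) - r * Real.cos (2*π*t)/(2*π)
    + u * (t/2 + Real.sin (2*π*t) * Real.cos (2*π*t)/(4*π))
    + v * (t/2 - Real.sin (2*π*t) * Real.cos (2*π*t)/(4*π))
    + z * (Real.sin (2*π*t))^2/(4*π) with hF
  have hder : ∀ t ∈ uIcc (0:ℝ) 1, HasDerivAt F
      (p + q * Real.cos (2*π*t) + r * Real.sin (2*π*t)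
      + u * Real.cos (2*π*t)^2 + v * Real.sin (2*π*t)^2
      + z * (Real.sin (2*π*t) * Real.cos (2*π*t))) t := by
    intro t _
    have hs := hasDerivAt_sin2pi t
    have hc := hasDerivAt_cos2pi t
    have hid : HasDerivAt (fun t : ℝ => t) 1 t := hasDerivAt_id t
    have hsc : HasDerivAt (fun t : ℝ => Real.sin (2*π*t) * Real.cos (2*π*t))
        ((2*π*Real.cos (2*π*t)) * Real.cos (2*π*t) + Real.sin (2*π*t) * -(2*π*Real.sin (2*π*t))) t :=
      hs.mul hc
    have hs2 : HasDerivAt (fun t : ℝ => (Real.sin (2*π*t))^2)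
        (2 * Real.sin (2*π*t) ^ 1 * (2*π*Real.cos (2*π*t))) t := by
      simpa using hs.fun_pow 2
    have H1 := (hid.const_mul p).add ((hs.const_mul q).div_const (2*π))
    have H2 := H1.sub ((hc.const_mul r).div_const (2*π))
    have H3 := H2.add (((hid.div_const 2).add (hsc.div_const (4*π))).const_mul u)
    have H4 := H3.add (((hid.div_const 2).sub (hsc.div_const (4*π))).const_mul v)
    have H := H4.add ((hs2.const_mul z).div_const (4*π))
    refine H.congr_deriv ?_
    have hpyth := Real.sin_sq_add_cos_sq (2*π*t)
    field_simp
    linear_combination (-4*(u+v)) * hpyth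
  have hint : IntervalIntegrable (fun t : ℝ => p + q * Real.cos (2*π*t) + r * Real.sin (2*π*t)
      + u * Real.cos (2*π*t)^2 + v * Real.sin (2*π*t)^2
      + z * (Real.sin (2*π*t) * Real.cos (2*π*t))) volume 0 1 := by
    apply Continuous.intervalIntegrable
    fun_prop
  rw [intervalIntegral.integral_eq_sub_of_hasDerivAt hder hint]
  simp only [hF]
  norm_num [Real.sin_two_pi, Real.cos_two_pi]
  ring

lemma abel_lipschitz (α β R : ℝ) (hR : 0 ≤ R) :
    LipschitzOnWith (3* |α| *R^2 + 2* |β| *R).toNNReal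
      (fun x : ℝ => α*x^3 + β*x^2) (Metric.closedBall 0 R) := by
  rw [lipschitzOnWith_iff_dist_le_mul]
  intro x hx y hy
  rw [Real.dist_eq, Real.dist_eq, Real.coe_toNNReal _ (by positivity)]
  have hx' : |x| ≤ R := by simpa [Real.dist_eq] using Metric.mem_closedBall.1 hx
  have hy' : |y| ≤ R := by simpa [Real.dist_eq] using Metric.mem_closedBall.1 hy
  have key : α*x^3+β*x^2 - (α*y^3+β*y^2) = (x - y) * (α*(x^2+x*y+y^2) + β*(x+y)) := by ring
  rw [key, abs_mul]
  have hxy : |x*y| ≤ R^2 := by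
    rw [abs_mul]
    nlinarith [abs_nonneg x, abs_nonneg y]
  have hx2 : |x^2| ≤ R^2 := by
    rw [abs_pow]
    exact pow_le_pow_left₀ (abs_nonneg x) hx' 2
  have hy2 : |y^2| ≤ R^2 := by
    rw [abs_pow]
    exact pow_le_pow_left₀ (abs_nonneg y) hy' 2
  have h1 : |x^2 + x*y + y^2| ≤ 3*R^2 := by
    have h3 := abs_add_three (x^2) (x*y) (y^2)
    linarith
  have h2 : |x+y| ≤ 2*R := (abs_add_le x y).trans (by linarith)
  calc |x-y| * |α*(x^2+x*y+y^2)+β*(x+y)|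
      ≤ |x-y| * (|α| *(3*R^2) + |β| *(2*R)) := by
        refine mul_le_mul_of_nonneg_left ?_ (abs_nonneg _)
        calc |α*(x^2+x*y+y^2)+β*(x+y)| ≤ |α*(x^2+x*y+y^2)| + |β*(x+y)| := abs_add_le _ _
          _ = |α| * |x^2+x*y+y^2| + |β| * |x+y| := by rw [abs_mul, abs_mul]
          _ ≤ |α| *(3*R^2) + |β| *(2*R) :=
              add_le_add (mul_le_mul_of_nonneg_left h1 (abs_nonneg α))
                (mul_le_mul_of_nonneg_left h2 (abs_nonneg β))
    _ = (3* |α| *R^2 + 2* |β| *R) * |x - y| := by ring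

/-- Sufficiency: proportional zero-mean trigonometric coefficients give a center. -/
lemma center_of_proportional (α β c₁ c₂ : ℝ) :
    HasCenterAtZero (fun t => α * (c₁ * Real.cos (2*π*t) + c₂ * Real.sin (2*π*t)))
      (fun t => β * (c₁ * Real.cos (2*π*t) + c₂ * Real.sin (2*π*t))) := by
  set M : ℝ := |c₁| + |c₂| + 1 with hM
  have hM1 : 1 ≤ M := by
    have := abs_nonneg c₁; have := abs_nonneg c₂; simp only [hM]; linarith
  set K : ℝ := (8* |α| + 4* |β|) * M + 1 with hK
  have hK1 : 1 ≤ K := by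
    have h8 : 0 ≤ (8* |α| + 4* |β|) * M := by positivity
    simp only [hK]; linarith
  have hK0 : 0 < K := by linarith
  set r : ℝ := 1/K with hr
  have hr0 : 0 < r := by positivity
  have hr1 : r ≤ 1 := by
    rw [hr, div_le_one hK0]; exact hK1
  refine ⟨r, hr0, ?_⟩
  intro ρ hρ
  have hρr : |ρ| ≤ r := le_of_lt hρ
  -- Picard–Lindelöf for the autonomous equation y' = α y³ + β y²
  have hpl : IsPicardLindelof (fun _ y => α*y^3 + β*y^2) (tmin := -M) (tmax := M)
      ⟨0, ⟨by linarith, by linarith⟩⟩ ρ r.toNNReal 0 ((8* |α|+4* |β|)*r^2).toNNReal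
      ((3* |α| *(2*r)^2 + 2* |β| *(2*r)).toNNReal) := by
    have hrc : ((r.toNNReal : NNReal) : ℝ) = r := Real.coe_toNNReal _ (le_of_lt hr0)
    constructor
    · intro t _
      rw [hrc]
      refine (abel_lipschitz α β (2*r) (by linarith)).mono ?_
      refine Metric.closedBall_subset_closedBall' ?_
      have : dist ρ 0 = |ρ| := by simp [Real.dist_eq]
      rw [this]; linarith
    · intro x _
      exact continuousOn_const
    · intro t _ x hx
      rw [hrc] at hx
      rw [Real.coe_toNNReal _ (by positivity)]
      have hxd : |x - ρ| ≤ r := by simpa [Real.dist_eq] using Metric.mem_closedBall.1 hx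
      have hxb : |x| ≤ 2*r := by
        have := abs_sub_abs_le_abs_sub x ρ
        linarith
    -- ‖α x³ + β x²‖ ≤ (8|α|+4|β|) r²
      have h3 : |x^3| ≤ 8*r^3 := by
        rw [abs_pow]
        calc |x|^3 ≤ (2*r)^3 := pow_le_pow_left₀ (abs_nonneg x) hxb 3
          _ = 8*r^3 := by ring
      have h2 : |x^2| ≤ 4*r^2 := by
        rw [abs_pow]
        calc |x|^2 ≤ (2*r)^2 := pow_le_pow_left₀ (abs_nonneg x) hxb 2
          _ = 4*r^2 := by ring
      have : |α*x^3 + β*x^2| ≤ |α| *(8*r^3) + |β| *(4*r^2) := by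
        calc |α*x^3 + β*x^2| ≤ |α*x^3| + |β*x^2| := abs_add_le _ _
          _ = |α| * |x^3| + |β| * |x^2| := by rw [abs_mul, abs_mul]
          _ ≤ |α| *(8*r^3) + |β| *(4*r^2) :=
              add_le_add (mul_le_mul_of_nonneg_left h3 (abs_nonneg α))
                (mul_le_mul_of_nonneg_left h2 (abs_nonneg β))
      have hr3 : r^3 ≤ r^2 := by nlinarith
      calc ‖α*x^3 + β*x^2‖ = |α*x^3 + β*x^2| := rfl
        _ ≤ |α| *(8*r^3) + |β| *(4*r^2) := this
        _ ≤ (8* |α|+4* |β|)*r^2 := by nlinarith [abs_nonneg α, abs_nonneg β]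
    · have hmax : max (M - 0) (0 - -M) = M := by
        rw [sub_zero, zero_sub, neg_neg, max_self]
      show (((8* |α|+4* |β|)*r^2).toNNReal : ℝ) * max (M - 0) (0 - -M) ≤ (r.toNNReal : ℝ) - ((0:NNReal):ℝ)
      rw [hrc, NNReal.coe_zero, Real.coe_toNNReal _ (by positivity)]
      rw [hmax, sub_zero]
      have : (8* |α|+4* |β|)*r^2*M = ((8* |α|+4* |β|)*M*r)*r := by ring
      rw [this]
      have hle : (8* |α|+4* |β|)*M*r ≤ 1 := by
        rw [hr]
        rw [mul_one_div, div_le_one hK0]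
        simp only [hK]; linarith
      nlinarith
  obtain ⟨y, hy0, hy⟩ := IsPicardLindelof.exists_eq_forall_mem_Icc_hasDerivWithinAt₀ hpl
  replace hy0 : y 0 = ρ := hy0
  set w : ℝ → ℝ := fun t => (c₁ * Real.sin (2*π*t) + c₂ * (1 - Real.cos (2*π*t))) / (2*π) with hw
  have hmaps : MapsTo w (Icc (0:ℝ) 1) (Icc (-M) M) := by
    intro s _
    have hb := w_bound c₁ c₂ s
    rw [abs_le] at hb
    constructor
    · simp only [hw]; simp only [hM]; linarith [hb.1]
    · simp only [hw]; simp only [hM]; linarith [hb.2]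
  refine ⟨fun t => y (w t), ?_, ?_, ?_⟩
  · intro t ht
    have hwd := ((hasDerivAt_w c₁ c₂ t).hasDerivWithinAt (s := Icc (0:ℝ) 1))
    have hyd := hy (w t) (hmaps ht)
    have hcomp := HasDerivWithinAt.comp t hyd hwd hmaps
    have : (fun s => y (w s)) = y ∘ w := rfl
    rw [this]
    refine hcomp.congr_deriv ?_
    simp only [Function.comp_apply]
    ring
  · show y (w 0) = ρ
    have h0 : w 0 = 0 := w_zero c₁ c₂
    rw [h0, hy0]
  · show y (w 0) = y (w 1)
    have h0 : w 0 = 0 := w_zero c₁ c₂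
    have h1 : w 1 = 0 := w_one c₁ c₂
    rw [h0, h1]

lemma LipschitzOnWith.weaken' {K K' : NNReal} {f : ℝ → ℝ} {s : Set ℝ}
    (h : LipschitzOnWith K f s) (hK : K ≤ K') : LipschitzOnWith K' f s :=
  fun x hx y hy => le_trans (h hx hy) (mul_le_mul_left (ENNReal.coe_le_coe.2 hK) _)

/-- FTC on `[0,1]` for a function with a one-sided derivative within `Icc 0 1`. -/
lemma ftc_icc {f f' : ℝ → ℝ}
    (hf : ∀ x ∈ Icc (0:ℝ) 1, HasDerivWithinAt f (f' x) (Icc (0:ℝ) 1) x)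
    (hcont' : ContinuousOn f' (Icc (0:ℝ) 1)) {t : ℝ} (ht : t ∈ Icc (0:ℝ) 1) :
    ∫ s in (0:ℝ)..t, f' s = f t - f 0 := by
  have hcf : ContinuousOn f (Icc (0:ℝ) 1) := fun x hx => (hf x hx).continuousWithinAt
  apply intervalIntegral.integral_eq_sub_of_hasDeriv_right_of_le ht.1
  · exact hcf.mono (Icc_subset_Icc le_rfl ht.2)
  · intro x hx
    have hx' : x ∈ Icc (0:ℝ) 1 := ⟨le_of_lt hx.1, le_of_lt (lt_of_lt_of_le hx.2 ht.2)⟩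
    have hD : HasDerivAt f (f' x) x :=
      (hf x hx').hasDerivAt (Icc_mem_nhds hx.1 (lt_of_lt_of_le hx.2 ht.2))
    exact hD.hasDerivWithinAt
  · have : ContinuousOn f' (uIcc (0:ℝ) t) := by
      rw [uIcc_of_le ht.1]
      exact hcont'.mono (Icc_subset_Icc le_rfl ht.2)
    exact this.intervalIntegrable

/-- Core quantitative estimates for a positive periodic solution of the Abel equation. -/
lemma solution_est {A B : ℝ → ℝ} (hAc : Continuous A) (hBc : Continuous B)
    {K : ℝ} (hK1 : 1 ≤ K) (hKA : ∀ t, |A t| ≤ K) (hKB : ∀ t, |B t| ≤ K)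
    {γ : ℝ → ℝ} {ρ : ℝ} (hγ : IsAbelSolution A B γ) (h0 : γ 0 = ρ) (hper : γ 0 = γ 1)
    (hρ0 : 0 < ρ) (hρK : ρ ≤ 1/(8*K)) :
    (∀ t ∈ Icc (0:ℝ) 1, ρ/2 ≤ γ t ∧ γ t ≤ 2*ρ) ∧
    (∫ t in (0:ℝ)..1, (A t * γ t + B t)) = 0 := by
  have hK0 : (0:ℝ) < K := lt_of_lt_of_le one_pos hK1
  have hcγ : ContinuousOn γ (Icc 0 1) := fun x hx => (hγ x hx).continuousWithinAt
  -- γ never vanishes on [0,1]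
  have hne : ∀ t ∈ Icc (0:ℝ) 1, γ t ≠ 0 := by
    intro t₀ ht₀ h0'
    obtain ⟨R, hR⟩ := (isCompact_Icc).exists_bound_of_continuousOn hcγ
    have hR0 : (0:ℝ) ≤ R := le_trans (norm_nonneg _) (hR 0 (by norm_num))
    have hzero1 : γ 1 = 0 := by
      by_cases ht1 : t₀ = 1
      · rw [← ht1]; exact h0'
      have ht₀1 : t₀ < 1 := lt_of_le_of_ne ht₀.2 ht1
      have hlip : ∀ t, LipschitzOnWith ((3*K*R^2+2*K*R).toNNReal)
          (fun x : ℝ => A t*x^3+B t*x^2) (Metric.closedBall 0 R) := by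
        intro t
        refine LipschitzOnWith.weaken' (abel_lipschitz (A t) (B t) R hR0) ?_
        apply Real.toNNReal_le_toNNReal
        have := hKA t; have := hKB t
        have := abs_nonneg (A t); have := abs_nonneg (B t)
        nlinarith
      have hder : ∀ s ∈ Ico t₀ 1, HasDerivWithinAt γ (A s * γ s ^3 + B s * γ s ^2) (Ici s) s := by
        intro s hs
        have hs' : s ∈ Icc (0:ℝ) 1 := ⟨le_trans ht₀.1 hs.1, le_of_lt hs.2⟩
        have hmem : Icc (0:ℝ) 1 ∈ nhdsWithin s (Ici s) := by
          rw [mem_nhdsWithin]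
          exact ⟨Iio 1, isOpen_Iio, hs.2, fun x hx => ⟨le_trans hs'.1 hx.2, le_of_lt hx.1⟩⟩
        exact (hγ s hs').mono_of_mem_nhdsWithin hmem
      have hmemγ : ∀ s ∈ Ico t₀ 1, γ s ∈ Metric.closedBall (0:ℝ) R := by
        intro s hs
        have hs' : s ∈ Icc (0:ℝ) 1 := ⟨le_trans ht₀.1 hs.1, le_of_lt hs.2⟩
        rw [Metric.mem_closedBall, Real.dist_eq, sub_zero]
        exact hR s hs'
      have hkey := ODE_solution_unique_of_mem_Icc_right
        (v := fun t (x:ℝ) => A t * x^3 + B t * x^2)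
        (s := fun _ => Metric.closedBall (0:ℝ) R)
        (fun t _ => hlip t)
        (hcγ.mono (Icc_subset_Icc ht₀.1 le_rfl))
        hder hmemγ
        (continuousOn_const (c := (0:ℝ)))
        (fun s _ => by simpa using (hasDerivWithinAt_const s (Ici s) (0:ℝ)))
        (fun s _ => Metric.mem_closedBall_self hR0)
        (by simpa using h0')
      have h1mem : (1:ℝ) ∈ Icc t₀ 1 := ⟨le_of_lt ht₀1, le_rfl⟩
      exact hkey h1mem
    have : ρ = 0 := by rw [← h0, hper, hzero1]
    exact absurd this (ne_of_gt hρ0)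
  -- positivity
  have hpos : ∀ t ∈ Icc (0:ℝ) 1, 0 < γ t := by
    intro t ht
    rcases lt_trichotomy (γ t) 0 with hlt | heq | hgt
    · exfalso
      have hsub : uIcc (0:ℝ) t ⊆ Icc 0 1 := by
        rw [uIcc_of_le ht.1]; exact Icc_subset_Icc le_rfl ht.2
      have hIVT := intermediate_value_uIcc (hcγ.mono hsub)
      have h0m : (0:ℝ) ∈ uIcc (γ 0) (γ t) := by
        rw [mem_uIcc]; right
        exact ⟨le_of_lt hlt, by rw [h0]; exact le_of_lt hρ0⟩
      obtain ⟨s, hs, hs0⟩ := hIVT h0m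
      exact hne s (hsub hs) hs0
    · exact absurd heq (hne t ht)
    · exact hgt
  -- u = 1/γ
  set u : ℝ → ℝ := fun t => (γ t)⁻¹ with hu
  have hud : ∀ t ∈ Icc (0:ℝ) 1, HasDerivWithinAt u (-(A t * γ t + B t)) (Icc 0 1) t := by
    intro t ht
    have hD := (hγ t ht).inv (ne_of_gt (hpos t ht))
    refine hD.congr_deriv ?_
    have hne' : γ t ≠ 0 := ne_of_gt (hpos t ht)
    field_simp
  have hcAB : ContinuousOn (fun t => -(A t * γ t + B t)) (Icc (0:ℝ) 1) :=
    ((hAc.continuousOn.mul hcγ).add hBc.continuousOn).neg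
  have hftcu : ∀ t ∈ Icc (0:ℝ) 1, ∫ s in (0:ℝ)..t, -(A s * γ s + B s) = u t - u 0 :=
    fun t ht => ftc_icc hud hcAB ht
  have hcu : ContinuousOn u (Icc 0 1) := fun x hx => (hud x hx).continuousWithinAt
  have hu0 : u 0 = ρ⁻¹ := by simp only [hu, h0]
  have hρinv : 8*K ≤ ρ⁻¹ := by
    rw [inv_eq_one_div, le_div_iff₀ hρ0]
    calc 8*K*ρ ≤ 8*K*(1/(8*K)) := by
          apply mul_le_mul_of_nonneg_left hρK (by positivity)
      _ = 1 := by field_simp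
  -- bootstrap: u > 2 everywhere
  have hbig : ∀ t ∈ Icc (0:ℝ) 1, 2 < u t := by
    by_contra hcon
    push_neg at hcon
    obtain ⟨t₁, ht₁, hle⟩ := hcon
    set S : Set ℝ := {t ∈ Icc (0:ℝ) 1 | u t ≤ 2} with hS
    have hSne : S.Nonempty := ⟨t₁, ht₁, hle⟩
    have hScl : IsClosed S := by
      have : S = Icc (0:ℝ) 1 ∩ u ⁻¹' (Iic 2) := by
        ext x; simp [hS, mem_sep_iff]
      rw [this]
      exact hcu.preimage_isClosed_of_isClosed isClosed_Icc isClosed_Iic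
    have hSbdd : BddBelow S := ⟨0, fun x hx => hx.1.1⟩
    set t₀ := sInf S with ht₀def
    have ht₀S : t₀ ∈ S := hScl.csInf_mem hSne hSbdd
    obtain ⟨ht₀Icc, ht₀le⟩ := ht₀S
    have hlt : ∀ s ∈ Icc (0:ℝ) 1, s < t₀ → 2 < u s := by
      intro s hs hst
      by_contra hsle
      push_neg at hsle
      exact absurd (csInf_le hSbdd ⟨hs, hsle⟩) (not_le.2 hst)
    have ht₀pos : 0 < t₀ := by
      rcases lt_or_eq_of_le ht₀Icc.1 with h | h
      · exact h
      · exfalso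
        rw [← h, hu0] at ht₀le
        linarith
    have hu_t₀_ge : 2 ≤ u t₀ := by
      have hcw : ContinuousWithinAt u (Ico 0 t₀) t₀ :=
        (hcu t₀ ht₀Icc).mono (fun x hx => ⟨hx.1, le_trans (le_of_lt hx.2) ht₀Icc.2⟩)
      have hnb : (nhdsWithin t₀ (Ico (0:ℝ) t₀)).NeBot := by
        rw [← mem_closure_iff_nhdsWithin_neBot, closure_Ico (ne_of_lt ht₀pos)]
        exact ⟨le_of_lt ht₀pos, le_rfl⟩
      refine ge_of_tendsto hcw ?_
      refine Filter.eventually_of_mem self_mem_nhdsWithin (fun s hs => ?_)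
      exact le_of_lt (hlt s ⟨hs.1, le_trans (le_of_lt hs.2) ht₀Icc.2⟩ hs.2)
    have hbound : ∀ s ∈ Ι (0:ℝ) t₀, ‖-(A s * γ s + B s)‖ ≤ 2*K := by
      intro s hs
      rw [uIoc_of_le (le_of_lt ht₀pos)] at hs
      have hsIcc : s ∈ Icc (0:ℝ) 1 := ⟨le_of_lt hs.1, le_trans hs.2 ht₀Icc.2⟩
      have h2u : 2 ≤ u s := by
        rcases lt_or_eq_of_le hs.2 with h | h
        · exact le_of_lt (hlt s hsIcc h)
        · rw [h]; exact hu_t₀_ge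
      have hγpos := hpos s hsIcc
      have hγs : γ s ≤ 1/2 := by
        have h3 := mul_le_mul_of_nonneg_left h2u (le_of_lt hγpos)
        rw [hu] at h3
        rw [mul_inv_cancel₀ (ne_of_gt hγpos)] at h3
        linarith
      rw [Real.norm_eq_abs, abs_neg]
      calc |A s * γ s + B s| ≤ |A s * γ s| + |B s| := abs_add_le _ _
        _ = |A s| * |γ s| + |B s| := by rw [abs_mul]
        _ ≤ K * (1/2) + K := by
            have h1 := hKA s; have h2 := hKB s
            have h3 : |γ s| ≤ 1/2 := by rw [abs_of_pos hγpos]; exact hγs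
            have h4 := abs_nonneg (A s); have h5 := abs_nonneg (γ s)
            nlinarith
        _ ≤ 2*K := by linarith
    have hIb : ‖∫ s in (0:ℝ)..t₀, -(A s * γ s + B s)‖ ≤ 2*K * |t₀ - 0| :=
      intervalIntegral.norm_integral_le_of_norm_le_const hbound
    have hint := hftcu t₀ ht₀Icc
    have ht₀1 : |t₀ - (0:ℝ)| ≤ 1 := by
      rw [sub_zero, abs_of_pos ht₀pos]; exact ht₀Icc.2
    have habs : |u t₀ - u 0| ≤ 2*K := by
      rw [← hint]
      calc ‖∫ s in (0:ℝ)..t₀, -(A s * γ s + B s)‖ ≤ 2*K * |t₀ - 0| := hIb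
        _ ≤ 2*K := by nlinarith [abs_nonneg (t₀ - (0:ℝ))]
    have hfin := (abs_le.1 habs).1
    rw [hu0] at hfin
    linarith
  -- main bounds
  have hbounds : ∀ t ∈ Icc (0:ℝ) 1, ρ/2 ≤ γ t ∧ γ t ≤ 2*ρ := by
    intro t ht
    have hbound : ∀ s ∈ Ι (0:ℝ) t, ‖-(A s * γ s + B s)‖ ≤ 2*K := by
      intro s hs
      rw [uIoc_of_le ht.1] at hs
      have hsIcc : s ∈ Icc (0:ℝ) 1 := ⟨le_of_lt hs.1, le_trans hs.2 ht.2⟩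
      have h2u : 2 ≤ u s := le_of_lt (hbig s hsIcc)
      have hγpos := hpos s hsIcc
      have hγs : γ s ≤ 1/2 := by
        have h3 := mul_le_mul_of_nonneg_left h2u (le_of_lt hγpos)
        rw [hu] at h3
        rw [mul_inv_cancel₀ (ne_of_gt hγpos)] at h3
        linarith
      rw [Real.norm_eq_abs, abs_neg]
      calc |A s * γ s + B s| ≤ |A s * γ s| + |B s| := abs_add_le _ _
        _ = |A s| * |γ s| + |B s| := by rw [abs_mul]
        _ ≤ K * (1/2) + K := by
            have h1 := hKA s; have h2 := hKB s
            have h3 : |γ s| ≤ 1/2 := by rw [abs_of_pos hγpos]; exact hγs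
            have h4 := abs_nonneg (A s); have h5 := abs_nonneg (γ s)
            nlinarith
        _ ≤ 2*K := by linarith
    have hIb : ‖∫ s in (0:ℝ)..t, -(A s * γ s + B s)‖ ≤ 2*K * |t - 0| :=
      intervalIntegral.norm_integral_le_of_norm_le_const hbound
    have hint := hftcu t ht
    have ht1 : |t - (0:ℝ)| ≤ 1 := by
      rw [sub_zero, abs_of_nonneg ht.1]; exact ht.2
    have habs : |u t - u 0| ≤ 2*K := by
      rw [← hint]
      calc ‖∫ s in (0:ℝ)..t, -(A s * γ s + B s)‖ ≤ 2*K * |t - 0| := hIb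
        _ ≤ 2*K := by nlinarith [abs_nonneg (t - (0:ℝ))]
    have hup := (abs_le.1 habs).2
    have hdn := (abs_le.1 habs).1
    rw [hu0] at hup hdn
    -- ρ⁻¹ - 2K ≤ u t ≤ ρ⁻¹ + 2K, with 2K ≤ ρ⁻¹/4
    have hquarter : 2*K ≤ ρ⁻¹/4 := by linarith
    have hutlo : ρ⁻¹/2 ≤ u t := by linarith
    have huthi : u t ≤ 2*ρ⁻¹ := by linarith
    have hγt := hpos t ht
    have hγne : γ t ≠ 0 := ne_of_gt hγt
    have hρne : ρ ≠ 0 := ne_of_gt hρ0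
    constructor
    · -- from u t ≤ 2 ρ⁻¹ : (γ t)⁻¹ ≤ 2 ρ⁻¹ ⇒ ρ ≤ 2 γ t
      have h3 := mul_le_mul_of_nonneg_left huthi (le_of_lt (mul_pos hγt hρ0))
      rw [hu] at h3
      have he : γ t * ρ * (γ t)⁻¹ = ρ := by field_simp
      have he2 : γ t * ρ * (2*ρ⁻¹) = 2 * γ t := by field_simp
      rw [he, he2] at h3
      linarith
    · -- from ρ⁻¹/2 ≤ u t : γ t ≤ 2 ρ
      have h3 := mul_le_mul_of_nonneg_left hutlo (le_of_lt (mul_pos hγt hρ0))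
      rw [hu] at h3
      have he : γ t * ρ * (γ t)⁻¹ = ρ := by field_simp
      have he2 : γ t * ρ * (ρ⁻¹/2) = γ t / 2 := by field_simp
      rw [he, he2] at h3
      linarith
  refine ⟨hbounds, ?_⟩
  have h1 := hftcu 1 (by norm_num)
  have hu1 : u 1 = u 0 := by simp only [hu]; rw [← hper]
  rw [hu1, sub_self] at h1
  have hneg : ∫ s in (0:ℝ)..1, (A s * γ s + B s)
      = - ∫ s in (0:ℝ)..1, -(A s * γ s + B s) := by
    rw [intervalIntegral.integral_neg, neg_neg]
  rw [hneg, h1, neg_zero]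

lemma eq_zero_of_small {c C ρ₁ : ℝ} (hρ₁ : 0 < ρ₁)
    (h : ∀ ρ, 0 < ρ → ρ ≤ ρ₁ → |c| ≤ C*ρ) : c = 0 := by
  by_contra hc
  have hc0 : 0 < |c| := abs_pos.2 hc
  have hC : 0 < C := by
    have h1 := h ρ₁ hρ₁ le_rfl
    nlinarith
  set ρ := min ρ₁ (|c|/(2*C)) with hρ
  have hρ0 : 0 < ρ := lt_min hρ₁ (by positivity)
  have h2 := h ρ hρ0 (min_le_left _ _)
  have h3 : C*ρ ≤ C*(|c|/(2*C)) := mul_le_mul_of_nonneg_left (min_le_right _ _) (le_of_lt hC)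
  have h4 : C*(|c|/(2*C)) = |c|/2 := by field_simp
  rw [h4] at h3
  linarith

set_option maxHeartbeats 1000000 in
/-- Necessity direction. -/
lemma abel_center_necessity (a₀ a₁ a₂ b₀ b₁ b₂ : ℝ)
    (h : HasCenterAtZero
      (fun t => a₀ + a₁ * Real.cos (2 * Real.pi * t) + a₂ * Real.sin (2 * Real.pi * t))
      (fun t => b₀ + b₁ * Real.cos (2 * Real.pi * t) + b₂ * Real.sin (2 * Real.pi * t))) :
    a₀ = 0 ∧ b₀ = 0 ∧ a₂ * b₁ - a₁ * b₂ = 0 := by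
  set A : ℝ → ℝ := fun t => a₀ + a₁ * Real.cos (2*π*t) + a₂ * Real.sin (2*π*t) with hA
  set B : ℝ → ℝ := fun t => b₀ + b₁ * Real.cos (2*π*t) + b₂ * Real.sin (2*π*t) with hB
  have hAc : Continuous A := by fun_prop
  have hBc : Continuous B := by fun_prop
  set K : ℝ := |a₀| + |a₁| + |a₂| + |b₀| + |b₁| + |b₂| + 1 with hK
  have hK1 : 1 ≤ K := by
    have := abs_nonneg a₀; have := abs_nonneg a₁; have := abs_nonneg a₂
    have := abs_nonneg b₀; have := abs_nonneg b₁; have := abs_nonneg b₂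
    simp only [hK]; linarith
  have hK0 : (0:ℝ) < K := lt_of_lt_of_le one_pos hK1
  have htrig : ∀ t : ℝ, |Real.cos (2*π*t)| ≤ 1 ∧ |Real.sin (2*π*t)| ≤ 1 :=
    fun t => ⟨Real.abs_cos_le_one _, Real.abs_sin_le_one _⟩
  have hKA : ∀ t, |A t| ≤ K := by
    intro t
    obtain ⟨hc, hs⟩ := htrig t
    calc |A t| ≤ |a₀| + |a₁ * Real.cos (2*π*t)| + |a₂ * Real.sin (2*π*t)| := abs_add_three _ _ _
      _ = |a₀| + |a₁| * |Real.cos (2*π*t)| + |a₂| * |Real.sin (2*π*t)| := by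
          rw [abs_mul, abs_mul]
      _ ≤ K := by
          have := abs_nonneg a₁; have := abs_nonneg a₂
          have := abs_nonneg b₀; have := abs_nonneg b₁; have := abs_nonneg b₂
          simp only [hK]; nlinarith
  have hKB : ∀ t, |B t| ≤ K := by
    intro t
    obtain ⟨hc, hs⟩ := htrig t
    calc |B t| ≤ |b₀| + |b₁ * Real.cos (2*π*t)| + |b₂ * Real.sin (2*π*t)| := abs_add_three _ _ _
      _ = |b₀| + |b₁| * |Real.cos (2*π*t)| + |b₂| * |Real.sin (2*π*t)| := by
          rw [abs_mul, abs_mul]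
      _ ≤ K := by
          have := abs_nonneg a₀; have := abs_nonneg a₁; have := abs_nonneg a₂
          have := abs_nonneg b₁; have := abs_nonneg b₂
          simp only [hK]; nlinarith
  obtain ⟨ε, hε, hsol⟩ := h
  set ρ₁ : ℝ := min (ε/2) (1/(8*K)) with hρ₁def
  have hρ₁ : 0 < ρ₁ := lt_min (by linarith) (by positivity)
  -- master package for each small ρ
  have hmaster : ∀ ρ, 0 < ρ → ρ ≤ ρ₁ → ∃ γ : ℝ → ℝ,
      IsAbelSolution A B γ ∧ γ 0 = ρ ∧ ContinuousOn γ (Icc 0 1) ∧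
      (∀ t ∈ Icc (0:ℝ) 1, ρ/2 ≤ γ t ∧ γ t ≤ 2*ρ) ∧
      (∫ t in (0:ℝ)..1, (A t * γ t + B t)) = 0 ∧
      (∀ t ∈ Icc (0:ℝ) 1, |γ t - ρ| ≤ 12*K*ρ^2) := by
    intro ρ hρ0 hρle
    have hρε : |ρ| < ε := by
      rw [abs_of_pos hρ0]
      calc ρ ≤ ρ₁ := hρle
        _ ≤ ε/2 := min_le_left _ _
        _ < ε := by linarith
    obtain ⟨γ, hγ, h0, hper⟩ := hsol ρ hρε
    have hρK : ρ ≤ 1/(8*K) := le_trans hρle (min_le_right _ _)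
    obtain ⟨hbnd, hIz⟩ := solution_est hAc hBc hK1 hKA hKB hγ h0 hper hρ0 hρK
    have hcγ : ContinuousOn γ (Icc 0 1) := fun x hx => (hγ x hx).continuousWithinAt
    have hρ1 : ρ ≤ 1 := by
      have h8 : (1:ℝ)/(8*K) ≤ 1 := by
        rw [div_le_one (by positivity)]; linarith
      linarith
    refine ⟨γ, hγ, h0, hcγ, hbnd, hIz, ?_⟩
    intro t ht
    have hcder : ContinuousOn (fun s => A s * γ s ^ 3 + B s * γ s ^ 2) (Icc (0:ℝ) 1) :=
      ((hAc.continuousOn.mul (hcγ.pow 3)).add (hBc.continuousOn.mul (hcγ.pow 2)))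
    have hftc := ftc_icc hγ hcder ht
    have hbd : ∀ s ∈ Ι (0:ℝ) t, ‖A s * γ s ^ 3 + B s * γ s ^ 2‖ ≤ 12*K*ρ^2 := by
      intro s hs
      rw [uIoc_of_le ht.1] at hs
      have hsIcc : s ∈ Icc (0:ℝ) 1 := ⟨le_of_lt hs.1, le_trans hs.2 ht.2⟩
      obtain ⟨hlo, hhi⟩ := hbnd s hsIcc
      have hγabs : |γ s| ≤ 2*ρ := by
        rw [abs_of_pos (lt_of_lt_of_le (by linarith) hlo)]; exact hhi
      have h3 : |γ s ^ 3| ≤ 8*ρ^3 := by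
        rw [abs_pow]
        calc |γ s|^3 ≤ (2*ρ)^3 := pow_le_pow_left₀ (abs_nonneg _) hγabs 3
          _ = 8*ρ^3 := by ring
      have h2 : |γ s ^ 2| ≤ 4*ρ^2 := by
        rw [abs_pow]
        calc |γ s|^2 ≤ (2*ρ)^2 := pow_le_pow_left₀ (abs_nonneg _) hγabs 2
          _ = 4*ρ^2 := by ring
      have hAs := hKA s; have hBs := hKB s
      have hAn := abs_nonneg (A s); have hBn := abs_nonneg (B s)
      rw [Real.norm_eq_abs]
      calc |A s * γ s ^ 3 + B s * γ s ^ 2| ≤ |A s| * |γ s ^ 3| + |B s| * |γ s ^ 2| := by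
            rw [← abs_mul, ← abs_mul]; exact abs_add_le _ _
        _ ≤ K * (8*ρ^3) + K * (4*ρ^2) := by
            apply add_le_add
            · exact mul_le_mul hAs h3 (abs_nonneg _) (le_of_lt hK0)
            · exact mul_le_mul hBs h2 (abs_nonneg _) (le_of_lt hK0)
        _ ≤ 12*K*ρ^2 := by
            nlinarith [mul_nonneg (mul_nonneg (le_of_lt hK0) (sq_nonneg ρ))
              (by linarith : (0:ℝ) ≤ 1 - ρ)]
    have hIbd := intervalIntegral.norm_integral_le_of_norm_le_const hbd
    rw [hftc, h0] at hIbd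
    have ht1 : |t - (0:ℝ)| ≤ 1 := by rw [sub_zero, abs_of_nonneg ht.1]; exact ht.2
    calc |γ t - ρ| ≤ 12*K*ρ^2 * |t - 0| := hIbd
      _ ≤ 12*K*ρ^2 := by
          nlinarith [mul_nonneg (by positivity : (0:ℝ) ≤ 12*K*ρ^2) (sub_nonneg.2 ht1)]
  -- basic trig integrals of A and B
  have hintA : ∫ t in (0:ℝ)..1, A t = a₀ := by
    have hcg : EqOn A (fun t => a₀ + a₁ * Real.cos (2*π*t) + a₂ * Real.sin (2*π*t)
        + 0 * Real.cos (2*π*t)^2 + 0 * Real.sin (2*π*t)^2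
        + 0 * (Real.sin (2*π*t) * Real.cos (2*π*t))) (uIcc (0:ℝ) 1) := by
      intro t _; simp only [hA]; ring
    rw [intervalIntegral.integral_congr hcg, integral_trig_comb]; ring
  have hintB : ∫ t in (0:ℝ)..1, B t = b₀ := by
    have hcg : EqOn B (fun t => b₀ + b₁ * Real.cos (2*π*t) + b₂ * Real.sin (2*π*t)
        + 0 * Real.cos (2*π*t)^2 + 0 * Real.sin (2*π*t)^2
        + 0 * (Real.sin (2*π*t) * Real.cos (2*π*t))) (uIcc (0:ℝ) 1) := by
      intro t _; simp only [hB]; ring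
    rw [intervalIntegral.integral_congr hcg, integral_trig_comb]; ring
  -- Step A : b₀ = 0
  have hb₀ : b₀ = 0 := by
    apply eq_zero_of_small (C := 2*K) hρ₁
    intro ρ hρ0 hρle
    obtain ⟨γ, hγ, h0, hcγ, hbnd, hIz, hdiff⟩ := hmaster ρ hρ0 hρle
    have hiAγ : IntervalIntegrable (fun t => A t * γ t) volume 0 1 := by
      apply ContinuousOn.intervalIntegrable
      rw [uIcc_of_le zero_le_one]
      exact hAc.continuousOn.mul hcγ
    have hiB : IntervalIntegrable B volume 0 1 := hBc.intervalIntegrable _ _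
    have hsplit : (∫ t in (0:ℝ)..1, (A t * γ t + B t))
        = (∫ t in (0:ℝ)..1, A t * γ t) + ∫ t in (0:ℝ)..1, B t :=
      intervalIntegral.integral_add hiAγ hiB
    rw [hsplit, hintB] at hIz
    have hAγbd : ∀ s ∈ Ι (0:ℝ) 1, ‖A s * γ s‖ ≤ K * (2*ρ) := by
      intro s hs
      rw [uIoc_of_le zero_le_one] at hs
      have hsIcc : s ∈ Icc (0:ℝ) 1 := ⟨le_of_lt hs.1, hs.2⟩
      obtain ⟨hlo, hhi⟩ := hbnd s hsIcc
      have hγabs : |γ s| ≤ 2*ρ := by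
        rw [abs_of_pos (lt_of_lt_of_le (by linarith) hlo)]; exact hhi
      rw [Real.norm_eq_abs, abs_mul]
      exact mul_le_mul (hKA s) hγabs (abs_nonneg _) (le_of_lt hK0)
    have hIbd := intervalIntegral.norm_integral_le_of_norm_le_const hAγbd
    have : |b₀| = |∫ t in (0:ℝ)..1, A t * γ t| := by
      rw [show b₀ = -(∫ t in (0:ℝ)..1, A t * γ t) by linarith, abs_neg]
    rw [this]
    calc |∫ t in (0:ℝ)..1, A t * γ t| ≤ K*(2*ρ) * |1 - 0| := hIbd
      _ = 2*K*ρ := by norm_num; ring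
  -- Step B : a₀ = 0
  have ha₀ : a₀ = 0 := by
    apply eq_zero_of_small (C := 12*K^2) hρ₁
    intro ρ hρ0 hρle
    obtain ⟨γ, hγ, h0, hcγ, hbnd, hIz, hdiff⟩ := hmaster ρ hρ0 hρle
    have hiAγ : IntervalIntegrable (fun t => A t * γ t) volume 0 1 := by
      apply ContinuousOn.intervalIntegrable
      rw [uIcc_of_le zero_le_one]
      exact hAc.continuousOn.mul hcγ
    have hiB : IntervalIntegrable B volume 0 1 := hBc.intervalIntegrable _ _
    have hsplit : (∫ t in (0:ℝ)..1, (A t * γ t + B t))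
        = (∫ t in (0:ℝ)..1, A t * γ t) + ∫ t in (0:ℝ)..1, B t :=
      intervalIntegral.integral_add hiAγ hiB
    rw [hsplit, hintB, hb₀, add_zero] at hIz
    -- ∫ A γ = 0 ; split A γ = A ρ + A (γ - ρ)
    have hiAρ : IntervalIntegrable (fun t => A t * ρ) volume 0 1 :=
      (hAc.mul continuous_const).intervalIntegrable _ _
    have hiAd : IntervalIntegrable (fun t => A t * (γ t - ρ)) volume 0 1 := by
      apply ContinuousOn.intervalIntegrable
      rw [uIcc_of_le zero_le_one]
      exact hAc.continuousOn.mul (hcγ.sub continuousOn_const)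
    have hsplit2 : (∫ t in (0:ℝ)..1, A t * γ t)
        = (∫ t in (0:ℝ)..1, A t * ρ) + ∫ t in (0:ℝ)..1, A t * (γ t - ρ) := by
      rw [← intervalIntegral.integral_add hiAρ hiAd]
      apply intervalIntegral.integral_congr
      intro t _; ring
    have hAρ : (∫ t in (0:ℝ)..1, A t * ρ) = a₀ * ρ := by
      rw [intervalIntegral.integral_mul_const, hintA]
    rw [hsplit2, hAρ] at hIz
    have hbd2 : ∀ s ∈ Ι (0:ℝ) 1, ‖A s * (γ s - ρ)‖ ≤ K * (12*K*ρ^2) := by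
      intro s hs
      rw [uIoc_of_le zero_le_one] at hs
      have hsIcc : s ∈ Icc (0:ℝ) 1 := ⟨le_of_lt hs.1, hs.2⟩
      rw [Real.norm_eq_abs, abs_mul]
      exact mul_le_mul (hKA s) (hdiff s hsIcc) (abs_nonneg _) (le_of_lt hK0)
    have hIbd := intervalIntegral.norm_integral_le_of_norm_le_const hbd2
    have heq : |a₀| * ρ = |∫ t in (0:ℝ)..1, A t * (γ t - ρ)| := by
      have e1 : |a₀| * ρ = |a₀ * ρ| := by rw [abs_mul, abs_of_pos hρ0]
      rw [e1, show a₀ * ρ = -(∫ t in (0:ℝ)..1, A t * (γ t - ρ)) by linarith, abs_neg]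
    have hfin : |a₀| * ρ ≤ 12*K^2*ρ^2 := by
      rw [heq]
      calc |∫ t in (0:ℝ)..1, A t * (γ t - ρ)| ≤ K*(12*K*ρ^2) * |1 - 0| := hIbd
        _ = 12*K^2*ρ^2 := by norm_num; ring
    nlinarith
  -- Step C : the moment condition
  set W : ℝ → ℝ := fun t => (b₁ * Real.sin (2*π*t) + b₂ * (1 - Real.cos (2*π*t))) / (2*π) with hW
  have hBW : ∀ t : ℝ, B t = b₁ * Real.cos (2*π*t) + b₂ * Real.sin (2*π*t) := by
    intro t
    simp only [hB]
    rw [hb₀]; ring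
  have hWder : ∀ t : ℝ, HasDerivAt W (B t) t := by
    intro t
    rw [hBW t]
    exact hasDerivAt_w b₁ b₂ t
  have hWbd : ∀ t : ℝ, |W t| ≤ |b₁| + |b₂| := fun t => w_bound b₁ b₂ t
  have hWc : Continuous W := by fun_prop
  have hintW : ∀ t ∈ Icc (0:ℝ) 1, ∫ s in (0:ℝ)..t, B s = W t := by
    intro t ht
    have := intervalIntegral.integral_eq_sub_of_hasDerivAt (f := W) (f' := B)
      (fun s _ => hWder s) (hBc.intervalIntegrable 0 t)
    rw [this]
    have h0 : W 0 = 0 := w_zero b₁ b₂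
    rw [h0, sub_zero]
  have hAW : (∫ t in (0:ℝ)..1, A t * W t) = (a₂*b₁ - a₁*b₂)/(4*π) := by
    have hπ : (2*π) ≠ 0 := by positivity
    have hcg : EqOn (fun t => A t * W t) (fun t => 0 + (a₁*b₂/(2*π)) * Real.cos (2*π*t)
        + (a₂*b₂/(2*π)) * Real.sin (2*π*t)
        + (-(a₁*b₂)/(2*π)) * Real.cos (2*π*t)^2 + (a₂*b₁/(2*π)) * Real.sin (2*π*t)^2
        + ((a₁*b₁ - a₂*b₂)/(2*π)) * (Real.sin (2*π*t) * Real.cos (2*π*t))) (uIcc (0:ℝ) 1) := by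
      intro t _
      simp only [hA, hW, ha₀]
      field_simp
      ring
    rw [intervalIntegral.integral_congr hcg, integral_trig_comb]
    field_simp
    ring
  have hmom : (∫ t in (0:ℝ)..1, A t * W t) = 0 := by
    apply eq_zero_of_small (C := K*(8*K + 36*K^2)) hρ₁
    intro ρ hρ0 hρle
    obtain ⟨γ, hγ, h0, hcγ, hbnd, hIz, hdiff⟩ := hmaster ρ hρ0 hρle
    have hρK : ρ ≤ 1/(8*K) := le_trans hρle (min_le_right _ _)
    have hρ1 : ρ ≤ 1 := by
      have h8 : (1:ℝ)/(8*K) ≤ 1 := by rw [div_le_one (by positivity)]; linarith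
      linarith
    -- remainder r and its bound
    set Rm : ℝ → ℝ := fun t => γ t - ρ - ρ^2 * W t with hRm
    have hRmbd : ∀ t ∈ Icc (0:ℝ) 1, |Rm t| ≤ (8*K + 36*K^2)*ρ^3 := by
      intro t ht
      have hcder : ContinuousOn (fun s => A s * γ s ^ 3 + B s * γ s ^ 2) (Icc (0:ℝ) 1) :=
        ((hAc.continuousOn.mul (hcγ.pow 3)).add (hBc.continuousOn.mul (hcγ.pow 2)))
      have hftc := ftc_icc hγ hcder ht
      have hWt := hintW t ht
      have hsub : (∫ s in (0:ℝ)..t, (A s * γ s ^ 3 + B s * γ s ^ 2 - ρ^2 * B s))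
          = (∫ s in (0:ℝ)..t, (A s * γ s ^ 3 + B s * γ s ^ 2)) - ρ^2 * ∫ s in (0:ℝ)..t, B s := by
        rw [← intervalIntegral.integral_const_mul]
        apply intervalIntegral.integral_sub
        · apply ContinuousOn.intervalIntegrable
          rw [uIcc_of_le ht.1]
          exact hcder.mono (Icc_subset_Icc le_rfl ht.2)
        · exact (continuous_const.mul hBc).intervalIntegrable _ _
      have hRmeq : Rm t = ∫ s in (0:ℝ)..t, (A s * γ s ^ 3 + B s * γ s ^ 2 - ρ^2 * B s) := by
        rw [hsub, hftc, hWt, h0]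
      have hbd3 : ∀ s ∈ Ι (0:ℝ) t, ‖A s * γ s ^ 3 + B s * γ s ^ 2 - ρ^2 * B s‖
          ≤ (8*K + 36*K^2)*ρ^3 := by
        intro s hs
        rw [uIoc_of_le ht.1] at hs
        have hsIcc : s ∈ Icc (0:ℝ) 1 := ⟨le_of_lt hs.1, le_trans hs.2 ht.2⟩
        obtain ⟨hlo, hhi⟩ := hbnd s hsIcc
        have hγpos : 0 < γ s := lt_of_lt_of_le (by linarith) hlo
        have hγabs : |γ s| ≤ 2*ρ := by rw [abs_of_pos hγpos]; exact hhi
        have h3 : |γ s ^ 3| ≤ 8*ρ^3 := by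
          rw [abs_pow]
          calc |γ s|^3 ≤ (2*ρ)^3 := pow_le_pow_left₀ (abs_nonneg _) hγabs 3
            _ = 8*ρ^3 := by ring
        have hkey : A s * γ s ^ 3 + B s * γ s ^ 2 - ρ^2 * B s
            = A s * γ s ^ 3 + B s * ((γ s - ρ)*(γ s + ρ)) := by ring
        rw [Real.norm_eq_abs, hkey]
        have hsum : |γ s + ρ| ≤ 3*ρ := by
          rw [abs_of_pos (by linarith)]
          linarith
        have hd := hdiff s hsIcc
        calc |A s * γ s ^ 3 + B s * ((γ s - ρ)*(γ s + ρ))|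
            ≤ |A s * γ s ^ 3| + |B s * ((γ s - ρ)*(γ s + ρ))| := abs_add_le _ _
          _ = |A s| * |γ s ^ 3| + |B s| * (|γ s - ρ| * |γ s + ρ|) := by
              rw [abs_mul, abs_mul, abs_mul]
          _ ≤ K * (8*ρ^3) + K * ((12*K*ρ^2) * (3*ρ)) := by
              apply add_le_add
              · exact mul_le_mul (hKA s) h3 (abs_nonneg _) (le_of_lt hK0)
              · apply mul_le_mul (hKB s) _ (mul_nonneg (abs_nonneg _) (abs_nonneg _))
                  (le_of_lt hK0)
                exact mul_le_mul hd hsum (abs_nonneg _) (by positivity)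
          _ = (8*K + 36*K^2)*ρ^3 := by ring
      have hIbd := intervalIntegral.norm_integral_le_of_norm_le_const hbd3
      rw [← hRmeq] at hIbd
      have ht1 : |t - (0:ℝ)| ≤ 1 := by rw [sub_zero, abs_of_nonneg ht.1]; exact ht.2
      calc |Rm t| ≤ (8*K + 36*K^2)*ρ^3 * |t - 0| := hIbd
        _ ≤ (8*K + 36*K^2)*ρ^3 := by
            nlinarith [mul_nonneg (by positivity : (0:ℝ) ≤ (8*K + 36*K^2)*ρ^3)
              (sub_nonneg.2 ht1)]
    -- split the zero integral
    have hiAγ : IntervalIntegrable (fun t => A t * γ t) volume 0 1 := by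
      apply ContinuousOn.intervalIntegrable
      rw [uIcc_of_le zero_le_one]
      exact hAc.continuousOn.mul hcγ
    have hiB : IntervalIntegrable B volume 0 1 := hBc.intervalIntegrable _ _
    have hsplit : (∫ t in (0:ℝ)..1, (A t * γ t + B t))
        = (∫ t in (0:ℝ)..1, A t * γ t) + ∫ t in (0:ℝ)..1, B t :=
      intervalIntegral.integral_add hiAγ hiB
    rw [hsplit, hintB, hb₀, add_zero] at hIz
    have hiAρ : IntervalIntegrable (fun t => A t * ρ) volume 0 1 :=
      (hAc.mul continuous_const).intervalIntegrable _ _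
    have hiAW : IntervalIntegrable (fun t => ρ^2 * (A t * W t)) volume 0 1 :=
      (continuous_const.mul (hAc.mul hWc)).intervalIntegrable _ _
    have hiAR : IntervalIntegrable (fun t => A t * Rm t) volume 0 1 := by
      apply ContinuousOn.intervalIntegrable
      rw [uIcc_of_le zero_le_one]
      exact hAc.continuousOn.mul ((hcγ.sub continuousOn_const).sub
        (continuousOn_const.mul hWc.continuousOn))
    have hsplit3 : (∫ t in (0:ℝ)..1, A t * γ t)
        = (∫ t in (0:ℝ)..1, A t * ρ) + ((∫ t in (0:ℝ)..1, ρ^2 * (A t * W t))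
          + ∫ t in (0:ℝ)..1, A t * Rm t) := by
      rw [← intervalIntegral.integral_add hiAW hiAR, ← intervalIntegral.integral_add hiAρ
        (hiAW.add hiAR)]
      apply intervalIntegral.integral_congr
      intro t _
      simp only [hRm]
      ring
    have hAρ : (∫ t in (0:ℝ)..1, A t * ρ) = 0 := by
      rw [intervalIntegral.integral_mul_const, hintA, ha₀, zero_mul]
    have hAWρ : (∫ t in (0:ℝ)..1, ρ^2 * (A t * W t))
        = ρ^2 * ∫ t in (0:ℝ)..1, A t * W t := intervalIntegral.integral_const_mul _ _
    rw [hsplit3, hAρ, hAWρ, zero_add] at hIz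
    -- bound ∫ A Rm
    have hbd4 : ∀ s ∈ Ι (0:ℝ) 1, ‖A s * Rm s‖ ≤ K * ((8*K + 36*K^2)*ρ^3) := by
      intro s hs
      rw [uIoc_of_le zero_le_one] at hs
      have hsIcc : s ∈ Icc (0:ℝ) 1 := ⟨le_of_lt hs.1, hs.2⟩
      rw [Real.norm_eq_abs, abs_mul]
      exact mul_le_mul (hKA s) (hRmbd s hsIcc) (abs_nonneg _) (le_of_lt hK0)
    have hIbd := intervalIntegral.norm_integral_le_of_norm_le_const hbd4
    have heq : |∫ t in (0:ℝ)..1, A t * W t| * ρ^2 = |∫ t in (0:ℝ)..1, A t * Rm t| := by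
      have e1 : |∫ t in (0:ℝ)..1, A t * W t| * ρ^2 = |(∫ t in (0:ℝ)..1, A t * W t) * ρ^2| := by
        rw [abs_mul, abs_of_pos (show (0:ℝ) < ρ^2 by positivity)]
      rw [e1, show (∫ t in (0:ℝ)..1, A t * W t) * ρ^2
        = -(∫ t in (0:ℝ)..1, A t * Rm t) by linarith, abs_neg]
    have hfin : |∫ t in (0:ℝ)..1, A t * W t| * ρ^2 ≤ K*((8*K + 36*K^2)) * ρ^3 := by
      rw [heq]
      calc |∫ t in (0:ℝ)..1, A t * Rm t| ≤ K*((8*K + 36*K^2)*ρ^3) * |1 - 0| := hIbd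
        _ = K*((8*K + 36*K^2)) * ρ^3 := by norm_num; ring
    have hρ2 : (0:ℝ) < ρ^2 := by positivity
    rw [← mul_le_mul_iff_of_pos_right hρ2]
    calc |∫ t in (0:ℝ)..1, A t * W t| * ρ^2 ≤ K*((8*K + 36*K^2)) * ρ^3 := hfin
      _ = K*(8*K + 36*K^2)*ρ * ρ^2 := by ring
  refine ⟨ha₀, hb₀, ?_⟩
  rw [hAW] at hmom
  have hπ : (0:ℝ) < 4*π := by positivity
  field_simp at hmom
  linarith [hmom]

theorem trigonometric_abel_center_characterization
    (a₀ a₁ a₂ b₀ b₁ b₂ : ℝ) :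
    HasCenterAtZero
      (fun t => a₀ + a₁ * Real.cos (2 * Real.pi * t) + a₂ * Real.sin (2 * Real.pi * t))
      (fun t => b₀ + b₁ * Real.cos (2 * Real.pi * t) + b₂ * Real.sin (2 * Real.pi * t)) ↔
    (a₀ = 0 ∧ b₀ = 0 ∧ a₂ * b₁ - a₁ * b₂ = 0) := by
  constructor
  · exact abel_center_necessity a₀ a₁ a₂ b₀ b₁ b₂
  · rintro ⟨ha, hb, hc⟩
    by_cases hbz : b₁ = 0 ∧ b₂ = 0
    · have hA : (fun t => a₀ + a₁ * Real.cos (2 * Real.pi * t) + a₂ * Real.sin (2 * Real.pi * t))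
          = fun t => (1:ℝ) * (a₁ * Real.cos (2*π*t) + a₂ * Real.sin (2*π*t)) := by
        funext t; rw [ha]; ring
      have hB : (fun t => b₀ + b₁ * Real.cos (2 * Real.pi * t) + b₂ * Real.sin (2 * Real.pi * t))
          = fun t => (0:ℝ) * (a₁ * Real.cos (2*π*t) + a₂ * Real.sin (2*π*t)) := by
        funext t; rw [hb, hbz.1, hbz.2]; ring
      rw [hA, hB]
      exact center_of_proportional 1 0 a₁ a₂
    · have hd : 0 < b₁^2 + b₂^2 := by
        rcases not_and_or.1 hbz with h | h
        · have := mul_self_pos.2 h; nlinarith [sq_nonneg b₂]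
        · have := mul_self_pos.2 h; nlinarith [sq_nonneg b₁]
      have hdne : b₁^2 + b₂^2 ≠ 0 := ne_of_gt hd
      set α := (a₁*b₁ + a₂*b₂)/(b₁^2+b₂^2) with hα
      have h1 : α * b₁ = a₁ := by
        rw [hα]; field_simp; linear_combination b₂ * hc
      have h2 : α * b₂ = a₂ := by
        rw [hα]; field_simp; linear_combination (-b₁) * hc
      have hA : (fun t => a₀ + a₁ * Real.cos (2 * Real.pi * t) + a₂ * Real.sin (2 * Real.pi * t))
          = fun t => α * (b₁ * Real.cos (2*π*t) + b₂ * Real.sin (2*π*t)) := by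
        funext t; rw [ha, ← h1, ← h2]; ring
      have hB : (fun t => b₀ + b₁ * Real.cos (2 * Real.pi * t) + b₂ * Real.sin (2 * Real.pi * t))
          = fun t => (1:ℝ) * (b₁ * Real.cos (2*π*t) + b₂ * Real.sin (2*π*t)) := by
        funext t; rw [hb]; ring
      rw [hA, hB]
      exact center_of_proportional α 1 b₁ b₂

end
end
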